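/- arXiv:2401.00253 — 13 statements merged into one kernel-verified Lean document; each statement's English description precedes it below -/
import Mathlib

section
/- Let V be an n-dimensional vector space over F_q, and let a, b, j be positive integers with j ≤ min{a,b} and a + b − j ≤ n. For any a-dimensional subspace A of V, the number of b-dimensional subspaces B of V with dim(B ∩ A) = j equals q^((a−j)(b−j)) · [a choose j]_q · [n−a choose b−j]_q. -/
/-- The Gaussian binomial coefficient, defined via the q-Pascal recurrence. -/
def gaussBinom (q : ℕ) : ℕ → ℕ → ℕ
  | _, 0 => 1
  | 0, _ + 1 => 0
  | m + 1, i + 1 => gaussBinom q m i + q ^ (i + 1) * gaussBinom q m (i + 1)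

set_option linter.unusedSectionVars false
set_option maxHeartbeats 1000000

open Module Submodule

universe v

section generic

lemma auxFinSub (K : Type*) [Field K] [Finite K] (V : Type*) [AddCommGroup V] [Module K V]
    [FiniteDimensional K V] : Finite (Submodule K V) := by
  have : Finite V := Module.finite_of_finite K
  exact Finite.of_injective _ SetLike.coe_injective

lemma auxCardFiberConst {α β : Type*} [Finite α] [Finite β] (f : α → β) {c : ℕ}
    (h : ∀ b : β, Nat.card {a // f a = b} = c) :
    Nat.card α = Nat.card β * c := by
  classical
  cases nonempty_fintype α
  cases nonempty_fintype β
  rw [← Nat.card_congr (Equiv.sigmaFiberEquiv f)]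
  rw [Nat.card_eq_fintype_card, Fintype.card_sigma]
  rw [Nat.card_eq_fintype_card]
  calc ∑ b : β, Fintype.card {a // f a = b}
      = ∑ _b : β, c := by
        refine Finset.sum_congr rfl fun b _ => ?_
        rw [← Nat.card_eq_fintype_card, h b]
    _ = Fintype.card β * c := by rw [Finset.sum_const, Finset.card_univ, smul_eq_mul]

lemma auxCardSplit {α : Type*} [Finite α] (P Q : α → Prop) :
    Nat.card {x // P x} = Nat.card {x : α // P x ∧ Q x} + Nat.card {x : α // P x ∧ ¬ Q x} := by
  classical
  rw [← Nat.card_congr (Equiv.subtypeSubtypeEquivSubtypeInter P Q),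
    ← Nat.card_congr (Equiv.subtypeSubtypeEquivSubtypeInter P (fun x => ¬ Q x)),
    ← Nat.card_sum]
  exact (Nat.card_congr (Equiv.sumCompl (fun x : {x // P x} => Q x))).symm

end generic

section linalg

variable {K : Type*} [Field K] [Fintype K]
variable {V : Type*} [AddCommGroup V] [Module K V] [FiniteDimensional K V]

lemma auxFinrankMapMkQAdd (p W : Submodule K V) :
    finrank K ↥(W.map p.mkQ) + finrank K ↥(W ⊓ p) = finrank K ↥W := by
  have h := LinearMap.finrank_range_add_finrank_ker (p.mkQ.comp W.subtype)
  have hr : LinearMap.range (p.mkQ.comp W.subtype) = W.map p.mkQ := by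
    rw [LinearMap.range_comp, range_subtype]
  have hk : LinearMap.ker (p.mkQ.comp W.subtype) = comap W.subtype p := by
    rw [LinearMap.ker_comp, ker_mkQ]
  rw [hr, hk] at h
  rw [← h]
  congr 1
  rw [← W.finrank_map_subtype_eq (comap W.subtype p), map_comap_subtype]

lemma auxMapComapMkQ (p : Submodule K V) (W' : Submodule K (V ⧸ p)) :
    (comap p.mkQ W').map p.mkQ = W' := by
  rw [Submodule.map_comap_eq, range_mkQ, top_inf_eq]

lemma auxFinrankComapMkQ (p : Submodule K V) (W' : Submodule K (V ⧸ p)) :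
    finrank K ↥(comap p.mkQ W') = finrank K ↥W' + finrank K ↥p := by
  have h := auxFinrankMapMkQAdd p (comap p.mkQ W')
  rw [auxMapComapMkQ, inf_eq_right.2 (Submodule.le_comap_mkQ p W')] at h
  omega

lemma auxInfEqBotOfNotLe {L W : Submodule K V} (hL : finrank K ↥L = 1)
    (h : ¬ L ≤ W) : W ⊓ L = ⊥ := by
  by_contra hb
  have h1 : finrank K ↥(W ⊓ L) ≤ finrank K ↥L := Submodule.finrank_mono inf_le_right
  have h2 : finrank K ↥(W ⊓ L) ≠ 0 := fun h0 => hb (Submodule.finrank_eq_zero.1 h0)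
  have h3 : W ⊓ L = L := eq_of_le_of_finrank_eq inf_le_right (by omega)
  exact h (h3 ▸ inf_le_left)

lemma auxMapMkQInj {p X Y : Submodule K V} (hX : p ≤ X) (hY : p ≤ Y)
    (h : map p.mkQ X = map p.mkQ Y) : X = Y := by
  have h2 := congrArg (comap p.mkQ) h
  rwa [comap_map_mkQ, comap_map_mkQ, sup_eq_right.2 hX, sup_eq_right.2 hY] at h2

lemma auxMapMkQInfEqBot (B A : Submodule K V) :
    (B.map (B ⊓ A).mkQ) ⊓ (A.map (B ⊓ A).mkQ) = ⊥ := by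
  rw [eq_bot_iff]
  rintro x ⟨hxB, hxA⟩
  obtain ⟨bb, hbb, rfl⟩ := hxB
  obtain ⟨aa, haa, he⟩ := hxA
  have hd : aa - bb ∈ B ⊓ A := (Submodule.Quotient.eq _).1 he
  have hbA : bb ∈ A := by
    have := A.sub_mem haa hd.2
    simpa using this
  show (B ⊓ A).mkQ bb ∈ (⊥ : Submodule K (V ⧸ (B ⊓ A)))
  simp only [mem_bot, mkQ_apply, Submodule.Quotient.mk_eq_zero]
  exact ⟨hbb, hbA⟩

lemma auxCardCompl (p : Submodule K V) :
    Nat.card { q : Submodule K V // IsCompl p q }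
      = Fintype.card K ^ (finrank K ↥p * (finrank K V - finrank K ↥p)) := by
  obtain ⟨q, hq⟩ := Submodule.exists_isCompl p
  set f0 : { f : V →ₗ[K] p // ∀ x : p, f x = x } := p.isComplEquivProj ⟨q, hq⟩ with hf0
  have e2 : { f : V →ₗ[K] p // ∀ x : p, f x = x } ≃ ((V ⧸ p) →ₗ[K] p) :=
  { toFun := fun f => p.liftQ ((f : V →ₗ[K] p) - (f0 : V →ₗ[K] p)) (by
      intro x hx
      simp [f.2 ⟨x, hx⟩, f0.2 ⟨x, hx⟩])
    invFun := fun g => ⟨(f0 : V →ₗ[K] p) + g.comp p.mkQ, by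
      intro x
      simp [f0.2 x, (Submodule.Quotient.mk_eq_zero p).2 x.2]⟩
    left_inv := by
      intro f
      ext v
      simp
    right_inv := by
      intro g
      refine LinearMap.ext fun v => ?_
      induction v using Submodule.Quotient.induction_on with
      | _ x => simp }
  rw [Nat.card_congr ((p.isComplEquivProj).trans e2)]
  have hc : Nat.card ((V ⧸ p) →ₗ[K] p) =
      Fintype.card K ^ (finrank K (V ⧸ p) * finrank K ↥p) := by
    have e := LinearMap.toMatrix (Module.finBasis K (V ⧸ p)) (Module.finBasis K ↥p)
    rw [Nat.card_eq_of_bijective e e.bijective]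
    unfold Matrix
    rw [Nat.card_eq_fintype_card, Fintype.card_fun, Fintype.card_fun,
      Fintype.card_fin, Fintype.card_fin, ← pow_mul, Nat.mul_comm]
  rw [hc, Nat.mul_comm]
  have := Submodule.finrank_quotient_add_finrank p
  congr 2
  omega

lemma auxCardRelCompl (X U : Submodule K V) (hXU : X ≤ U) :
    Nat.card { B : Submodule K V // B ⊔ X = U ∧ B ⊓ X = ⊥ }
      = Fintype.card K ^ (finrank K ↥X * (finrank K ↥U - finrank K ↥X)) := by
  have hinj : Function.Injective U.subtype := Subtype.coe_injective
  set X' : Submodule K ↥U := comap U.subtype X with hX'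
  have hmapX' : map U.subtype X' = X := by
    rw [hX', map_comap_subtype, inf_eq_right.2 hXU]
  have e : { C : Submodule K ↥U // IsCompl X' C } ≃
      { B : Submodule K V // B ⊔ X = U ∧ B ⊓ X = ⊥ } :=
  { toFun := fun C => ⟨map U.subtype C.1, by
      constructor
      · have := congrArg (map U.subtype) C.2.sup_eq_top
        rwa [Submodule.map_sup, hmapX', Submodule.map_top, range_subtype, sup_comm] at this
      · have := congrArg (map U.subtype) C.2.inf_eq_bot
        rwa [Submodule.map_inf _ hinj, hmapX', Submodule.map_bot, inf_comm] at this⟩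
    invFun := fun B => ⟨comap U.subtype B.1, by
      have hBU : B.1 ≤ U := le_trans le_sup_left (le_of_eq B.2.1)
      constructor
      · rw [disjoint_iff, hX', ← comap_inf]
        have : B.1 ⊓ X = ⊥ := B.2.2
        rw [inf_comm, this, comap_bot, ker_subtype]
      · rw [codisjoint_iff, eq_top_iff]
        rintro ⟨u, hu⟩ -
        have hu2 : u ∈ X ⊔ B.1 := by rw [sup_comm, B.2.1]; exact hu
        obtain ⟨x, hx, c, hc, rfl⟩ := mem_sup.1 hu2
        have hcU : c ∈ U := by simpa using U.sub_mem hu (hXU hx)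
        exact mem_sup.2 ⟨⟨x, hXU hx⟩, hx, ⟨c, hcU⟩, hc, rfl⟩⟩
    left_inv := fun C => Subtype.ext (by
      apply Submodule.map_injective_of_injective hinj
      rw [map_comap_subtype]
      have hCU : map U.subtype C.1 ≤ U := map_subtype_le U C.1
      rw [inf_eq_right.2 hCU])
    right_inv := fun B => Subtype.ext (by
      have hBU : B.1 ≤ U := le_trans le_sup_left (le_of_eq B.2.1)
      simp only [map_comap_subtype, inf_eq_right.2 hBU]) }
  rw [← Nat.card_congr e, auxCardCompl]
  congr 2
  · exact (Submodule.comapSubtypeEquivOfLe hXU).finrank_eq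
  congr 1
  exact (Submodule.comapSubtypeEquivOfLe hXU).finrank_eq

lemma auxCardFiberMain (A J : Submodule K V) (W : Submodule K (V ⧸ A)) (hJA : J ≤ A) :
    Nat.card {B : Submodule K V // B ⊓ A = J ∧ B.map A.mkQ = W}
      = Fintype.card K ^ ((finrank K ↥A - finrank K ↥J) * finrank K ↥W) := by
  have hAU : A ≤ comap A.mkQ W := Submodule.le_comap_mkQ _ _
  have hJU : J ≤ comap A.mkQ W := hJA.trans hAU
  have e : { C : Submodule K (V ⧸ J) //
        C ⊔ A.map J.mkQ = (comap A.mkQ W).map J.mkQ ∧ C ⊓ A.map J.mkQ = ⊥ }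
      ≃ {B : Submodule K V // B ⊓ A = J ∧ B.map A.mkQ = W} := by
    refine ⟨fun C => ⟨comap J.mkQ C.1, ?_, ?_⟩, fun B => ⟨B.1.map J.mkQ, ?_, ?_⟩,
      fun C => Subtype.ext ?_, fun B => Subtype.ext ?_⟩
    · -- B ⊓ A = J
      refine le_antisymm ?_ (le_inf (Submodule.le_comap_mkQ _ _) hJA)
      rintro x ⟨hxB, hxA⟩
      have hx1 : J.mkQ x ∈ C.1 := hxB
      have hx2 : J.mkQ x ∈ A.map J.mkQ := mem_map_of_mem hxA
      have : J.mkQ x ∈ (⊥ : Submodule K (V ⧸ J)) := C.2.2 ▸ (mem_inf.2 ⟨hx1, hx2⟩)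
      simpa [Submodule.Quotient.mk_eq_zero] using this
    · -- map A.mkQ B = W
      have hBAU : comap J.mkQ C.1 ⊔ A = comap A.mkQ W := by
        refine auxMapMkQInj (le_trans (Submodule.le_comap_mkQ _ _) le_sup_left) hJU ?_
        rw [Submodule.map_sup, auxMapComapMkQ, C.2.1]
      have h2 : (comap J.mkQ C.1 ⊔ A).map A.mkQ = (comap J.mkQ C.1).map A.mkQ := by
        rw [Submodule.map_sup, mkQ_map_self, sup_bot_eq]
      rw [← h2, hBAU, auxMapComapMkQ]
    · -- sup condition
      have hBA : B.1 ⊔ A = comap A.mkQ W := by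
        have h := congrArg (comap A.mkQ) B.2.2
        rwa [comap_map_mkQ, sup_comm] at h
      rw [← Submodule.map_sup, hBA]
    · -- inf condition
      obtain ⟨Bv, hB1, hB2⟩ := B
      show Bv.map J.mkQ ⊓ A.map J.mkQ = ⊥
      rw [← hB1]
      exact auxMapMkQInfEqBot Bv A
    · -- left_inv : map (comap C) = C
      show (comap J.mkQ C.1).map J.mkQ = C.1
      exact auxMapComapMkQ J C.1
    · -- right_inv : comap (map B) = B
      show comap J.mkQ (B.1.map J.mkQ) = B.1
      have hJB : J ≤ B.1 := le_trans (le_of_eq B.2.1.symm) inf_le_left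
      rw [comap_map_mkQ, sup_eq_right.2 hJB]
  rw [← Nat.card_congr e, auxCardRelCompl (A.map J.mkQ) ((comap A.mkQ W).map J.mkQ) (map_mono hAU)]
  have h1 := auxFinrankMapMkQAdd J A
  rw [inf_eq_right.2 hJA] at h1
  have h2 := auxFinrankMapMkQAdd J (comap A.mkQ W)
  rw [inf_eq_right.2 hJU, auxFinrankComapMkQ] at h2
  have e1 : finrank K ↥(A.map J.mkQ) = finrank K ↥A - finrank K ↥J := by omega
  have e2 : finrank K ↥((comap A.mkQ W).map J.mkQ) - finrank K ↥(A.map J.mkQ)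
      = finrank K ↥W := by omega
  rw [e2, e1]

end linalg

lemma auxCardGrass {K : Type*} [Field K] [Fintype K] :
    ∀ (m k : ℕ) (V : Type v) [AddCommGroup V] [Module K V]
    [FiniteDimensional K V], finrank K V = m →
    Nat.card {W : Submodule K V // finrank K ↥W = k}
      = gaussBinom (Fintype.card K) m k := by
  intro m
  induction m with
  | zero =>
    intro k V _ _ _ hV
    cases k with
    | zero =>
      haveI : Unique {W : Submodule K V // finrank K ↥W = 0} :=
        ⟨⟨⟨⊥, finrank_bot K V⟩⟩, fun W => Subtype.ext (Submodule.finrank_eq_zero.1 W.2)⟩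
      rw [Nat.card_unique]
      rfl
    | succ k =>
      haveI : IsEmpty {W : Submodule K V // finrank K ↥W = k + 1} := by
        refine ⟨fun W => ?_⟩
        have := Submodule.finrank_le W.1
        omega
      rw [Nat.card_of_isEmpty]
      rfl
  | succ m ih =>
    intro k V _ _ _ hV
    haveI : Finite V := Module.finite_of_finite K
    haveI : Finite (Submodule K V) := auxFinSub K V
    cases k with
    | zero =>
      haveI : Unique {W : Submodule K V // finrank K ↥W = 0} :=
        ⟨⟨⟨⊥, finrank_bot K V⟩⟩, fun W => Subtype.ext (Submodule.finrank_eq_zero.1 W.2)⟩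
      rw [Nat.card_unique]
      rfl
    | succ k =>
      -- pick a nonzero vector
      haveI : Nontrivial V := by
        apply Module.nontrivial_of_finrank_pos (R := K)
        omega
      obtain ⟨v, hv⟩ := exists_ne (0 : V)
      set L : Submodule K V := K ∙ v with hLdef
      have hL : finrank K ↥L = 1 := finrank_span_singleton hv
      have hVL : finrank K (V ⧸ L) = m := by
        have := Submodule.finrank_quotient_add_finrank L
        omega
      rw [auxCardSplit (fun W : Submodule K V => finrank K ↥W = k + 1) (fun W => L ≤ W)]
      have part1 : Nat.card {W : Submodule K V // finrank K ↥W = k + 1 ∧ L ≤ W}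
          = gaussBinom (Fintype.card K) m k := by
        rw [← ih k (V ⧸ L) hVL]
        apply Nat.card_congr
        refine ⟨fun W => ⟨W.1.map L.mkQ, ?_⟩,
          fun W' => ⟨comap L.mkQ W'.1, ?_, Submodule.le_comap_mkQ _ _⟩,
          fun W => Subtype.ext ?_, fun W' => Subtype.ext ?_⟩
        · have h := auxFinrankMapMkQAdd L W.1
          rw [inf_eq_right.2 W.2.2, hL, W.2.1] at h
          omega
        · have h := auxFinrankComapMkQ L W'.1
          rw [W'.2, hL] at h
          omega
        · show comap L.mkQ (map L.mkQ W.1) = W.1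
          rw [comap_map_mkQ, sup_eq_right.2 W.2.2]
        · exact auxMapComapMkQ L W'.1
      have part2 : Nat.card {W : Submodule K V // finrank K ↥W = k + 1 ∧ ¬ L ≤ W}
          = Fintype.card K ^ (k + 1) * gaussBinom (Fintype.card K) m (k + 1) := by
        haveI : Finite (Submodule K (V ⧸ L)) := auxFinSub K _
        rw [← ih (k + 1) (V ⧸ L) hVL]
        have key : ∀ W : {W : Submodule K V // finrank K ↥W = k + 1 ∧ ¬ L ≤ W},
            finrank K ↥(W.1.map L.mkQ) = k + 1 := by
          intro W
          have h := auxFinrankMapMkQAdd L W.1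
          rw [auxInfEqBotOfNotLe hL W.2.2, finrank_bot, W.2.1] at h
          omega
        rw [auxCardFiberConst
          (fun W : {W : Submodule K V // finrank K ↥W = k + 1 ∧ ¬ L ≤ W} =>
            (⟨W.1.map L.mkQ, key W⟩ : {W' : Submodule K (V ⧸ L) // finrank K ↥W' = k + 1}))
          (c := Fintype.card K ^ (k + 1)), Nat.mul_comm]
        intro W'
        set U : Submodule K V := comap L.mkQ W'.1 with hU
        clear_value U
        have hUrank : finrank K ↥U = k + 2 := by
          rw [hU, auxFinrankComapMkQ, W'.2, hL]
        have hLU : L ≤ U := hU ▸ Submodule.le_comap_mkQ _ _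
        have e : {a : {W : Submodule K V // finrank K ↥W = k + 1 ∧ ¬ L ≤ W} //
            (⟨a.1.map L.mkQ, key a⟩ : {W' : Submodule K (V ⧸ L) // finrank K ↥W' = k + 1}) = W'}
            ≃ { B : Submodule K V // B ⊔ L = U ∧ B ⊓ L = ⊥ } := by
          refine ⟨fun W => ⟨W.1.1, ?_, auxInfEqBotOfNotLe hL W.1.2.2⟩,
            fun B => ⟨⟨B.1, ?_, ?_⟩, ?_⟩, fun W => Subtype.ext (Subtype.ext rfl),
            fun B => Subtype.ext rfl⟩
          · have : W.1.1.map L.mkQ = W'.1 := congrArg Subtype.val W.2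
            rw [hU, ← this, comap_map_mkQ, sup_comm]
          · -- finrank B = k + 1
            have hs := Submodule.finrank_sup_add_finrank_inf_eq B.1 L
            rw [B.2.1, B.2.2, hUrank, hL, finrank_bot] at hs
            omega
          · -- ¬ L ≤ B
            intro hLB
            have : L = ⊥ := (inf_eq_right.2 hLB).symm.trans B.2.2
            rw [this, finrank_bot] at hL
            omega
          · -- map mkQ B = W'
            apply Subtype.ext
            show map L.mkQ B.1 = W'.1
            have h5 : (B.1 ⊔ L).map L.mkQ = U.map L.mkQ := by rw [B.2.1]
            rw [Submodule.map_sup, mkQ_map_self, sup_bot_eq] at h5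
            rw [h5, hU, auxMapComapMkQ]
        rw [Nat.card_congr e, auxCardRelCompl L U hLU, hL, hUrank]
        congr 1
        omega
      rw [part1, part2]
      rfl

theorem stmt2 (q n a b j : ℕ)
    (K : Type*) [Field K] [Fintype K] (hK : Fintype.card K = q)
    (V : Type*) [AddCommGroup V] [Module K V] [FiniteDimensional K V]
    (hn : Module.finrank K V = n)
    (ha : 0 < a) (hb : 0 < b) (hj : 0 < j)
    (hja : j ≤ a) (hjb : j ≤ b) (habj : a + b - j ≤ n)
    (A : Submodule K V) (hA : Module.finrank K A = a) :
    Nat.card {B : Submodule K V //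
        Module.finrank K B = b ∧ Module.finrank K ↥(B ⊓ A) = j}
      = q ^ ((a - j) * (b - j)) * gaussBinom q a j * gaussBinom q (n - a) (b - j) := by
  classical
  subst hK hn hA
  haveI : Finite V := Module.finite_of_finite K
  haveI : Finite (Submodule K V) := auxFinSub K V
  haveI : Finite (Submodule K (V ⧸ A)) := auxFinSub K _
  set a := finrank K ↥A with haA
  -- the fibration map
  have keyW : ∀ B : {B : Submodule K V //
      finrank K ↥B = b ∧ finrank K ↥(B ⊓ A) = j}, finrank K ↥(B.1.map A.mkQ) = b - j := by
    intro B
    have h := auxFinrankMapMkQAdd A B.1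
    rw [B.2.1, B.2.2] at h
    omega
  set f : {B : Submodule K V // finrank K ↥B = b ∧ finrank K ↥(B ⊓ A) = j} →
      ({J : Submodule K V // J ≤ A ∧ finrank K ↥J = j} ×
        {W : Submodule K (V ⧸ A) // finrank K ↥W = b - j}) :=
    fun B => (⟨B.1 ⊓ A, inf_le_right, B.2.2⟩, ⟨B.1.map A.mkQ, keyW B⟩) with hf
  rw [auxCardFiberConst f (c := Fintype.card K ^ ((a - j) * (b - j)))]
  · -- count the base
    rw [Nat.card_prod]
    have hcardJ : Nat.card {J : Submodule K V // J ≤ A ∧ finrank K ↥J = j}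
        = gaussBinom (Fintype.card K) a j := by
      rw [← auxCardGrass a j ↥A rfl]
      apply Nat.card_congr
      refine ⟨fun J => ⟨comap A.subtype J.1, ?_⟩,
        fun J' => ⟨map A.subtype J'.1, map_subtype_le A J'.1, ?_⟩,
        fun J => Subtype.ext ?_, fun J' => Subtype.ext ?_⟩
      · rw [(Submodule.comapSubtypeEquivOfLe J.2.1).finrank_eq]
        exact J.2.2
      · rw [A.finrank_map_subtype_eq]
        exact J'.2
      · show map A.subtype (comap A.subtype J.1) = J.1
        rw [map_comap_subtype, inf_eq_right.2 J.2.1]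
      · show comap A.subtype (map A.subtype J'.1) = J'.1
        rw [comap_map_eq, ker_subtype, sup_bot_eq]
    have hVA : finrank K (V ⧸ A) = finrank K V - a := by
      have := Submodule.finrank_quotient_add_finrank A
      omega
    have hcardW : Nat.card {W : Submodule K (V ⧸ A) // finrank K ↥W = b - j}
        = gaussBinom (Fintype.card K) (finrank K V - a) (b - j) :=
      auxCardGrass (finrank K V - a) (b - j) (V ⧸ A) hVA
    rw [hcardJ, hcardW]
    ring
  · -- fiber count
    rintro ⟨J, W⟩
    have e : {B : {B : Submodule K V // finrank K ↥B = b ∧ finrank K ↥(B ⊓ A) = j} //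
        f B = (J, W)} ≃ {B : Submodule K V // B ⊓ A = J.1 ∧ B.map A.mkQ = W.1} := by
      refine ⟨fun B => ⟨B.1.1, ?_, ?_⟩, fun B => ⟨⟨B.1, ?_, ?_⟩, ?_⟩,
        fun B => Subtype.ext (Subtype.ext rfl), fun B => Subtype.ext rfl⟩
      · exact congrArg Subtype.val (congrArg Prod.fst B.2)
      · exact congrArg Subtype.val (congrArg Prod.snd B.2)
      · -- finrank B = b
        have h := auxFinrankMapMkQAdd A B.1
        rw [B.2.1, B.2.2, J.2.2, W.2] at h
        omega
      · -- finrank (B ⊓ A) = j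
        rw [B.2.1, J.2.2]
      · -- f B = (J, W)
        refine Prod.ext ?_ ?_ <;> apply Subtype.ext
        · exact B.2.1
        · exact B.2.2
    rw [Nat.card_congr e, auxCardFiberMain A J.1 W.1 J.2.1, J.2.2, W.2]
end

section
/- Let G be a non-complete bipartite graph with parts X and Y. Define ε(X) = min{|N(A)| − |A| : ∅ ≠ A ⊆ X, N(A) ≠ Y} and ε(Y) = min{|N(B)| − |B| : ∅ ≠ B ⊆ Y, N(B) ≠ X}. Then |Y| − ε(X) = |X| − ε(Y). -/
/-- Neighborhood (in `Y`) of a set `A ⊆ X` in the bipartite graph given by the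
adjacency relation `E : X → Y → Prop`. -/
def nbrX {X Y : Type*} (E : X → Y → Prop) (A : Set X) : Set Y :=
  {y | ∃ a ∈ A, E a y}

/-- Neighborhood (in `X`) of a set `B ⊆ Y`. -/
def nbrY {X Y : Type*} (E : X → Y → Prop) (B : Set Y) : Set X :=
  {x | ∃ b ∈ B, E x b}

lemma nbrX_flip {X Y : Type*} (E : X → Y → Prop) (B : Set Y) :
    nbrX (fun b a => E a b) B = nbrY E B := rfl

lemma nbrY_flip {X Y : Type*} (E : X → Y → Prop) (A : Set X) :
    nbrY (fun b a => E a b) A = nbrX E A := rfl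

lemma nbr_bdd {Z W : Type*} [Fintype Z] [Fintype W] (F : Z → W → Prop) :
      BddBelow {d : ℤ | ∃ A : Set Z, A.Nonempty ∧ nbrX F A ≠ Set.univ ∧
        d = ((nbrX F A).ncard : ℤ) - A.ncard} := by
    refine ⟨-(Fintype.card Z), ?_⟩
    rintro d ⟨A, -, -, rfl⟩
    have hA : (A.ncard : ℤ) ≤ Fintype.card Z := by
      have := Set.ncard_le_ncard (Set.subset_univ A) Set.finite_univ
      rw [Set.ncard_univ, Nat.card_eq_fintype_card] at this
      exact_mod_cast this
    have : (0 : ℤ) ≤ (nbrX F A).ncard := Int.ofNat_nonneg _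
    omega

lemma nbr_aux {X Y : Type*} [Fintype X] [Fintype Y] (E : X → Y → Prop) (A : Set X)
    (hA : A.Nonempty) (hN : nbrX E A ≠ Set.univ) :
    ∃ B : Set Y, B.Nonempty ∧ nbrY E B ≠ Set.univ ∧
      ((nbrY E B).ncard : ℤ) - B.ncard ≤
        (((nbrX E A).ncard : ℤ) - A.ncard) + Fintype.card X - Fintype.card Y := by
  have hsub : nbrY E (nbrX E A)ᶜ ⊆ Aᶜ := by
    rintro x ⟨b, hb, hxb⟩ hxA
    exact hb ⟨x, hxA, hxb⟩
  refine ⟨(nbrX E A)ᶜ, Set.nonempty_compl.mpr hN, ?_, ?_⟩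
  · obtain ⟨a, ha⟩ := hA
    intro h
    have : a ∈ Aᶜ := hsub (h ▸ Set.mem_univ a)
    exact this ha
  · have h1 : ((nbrX E A)ᶜ.ncard : ℤ) = Fintype.card Y - (nbrX E A).ncard := by
      have := Set.ncard_add_ncard_compl (nbrX E A)
      rw [Nat.card_eq_fintype_card] at this
      omega
    have h2 : (nbrY E (nbrX E A)ᶜ).ncard ≤ Aᶜ.ncard :=
      Set.ncard_le_ncard hsub (Set.toFinite _)
    have h3 : (Aᶜ.ncard : ℤ) = Fintype.card X - A.ncard := by
      have := Set.ncard_add_ncard_compl A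
      rw [Nat.card_eq_fintype_card] at this
      omega
    rw [h1]
    have h2' : ((nbrY E (nbrX E A)ᶜ).ncard : ℤ) ≤ Aᶜ.ncard := by exact_mod_cast h2
    omega

theorem stmt3 {X Y : Type*} [Fintype X] [Fintype Y] (E : X → Y → Prop)
    (hnc : ∃ x y, ¬ E x y) :
    (Fintype.card Y : ℤ) -
        sInf {d : ℤ | ∃ A : Set X, A.Nonempty ∧ nbrX E A ≠ Set.univ ∧
          d = ((nbrX E A).ncard : ℤ) - A.ncard}
      = (Fintype.card X : ℤ) -
        sInf {d : ℤ | ∃ B : Set Y, B.Nonempty ∧ nbrY E B ≠ Set.univ ∧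
          d = ((nbrY E B).ncard : ℤ) - B.ncard} := by
  obtain ⟨x, y, hxy⟩ := hnc
  set S1 : Set ℤ := {d : ℤ | ∃ A : Set X, A.Nonempty ∧ nbrX E A ≠ Set.univ ∧
          d = ((nbrX E A).ncard : ℤ) - A.ncard} with hS1
  set S2 : Set ℤ := {d : ℤ | ∃ B : Set Y, B.Nonempty ∧ nbrY E B ≠ Set.univ ∧
          d = ((nbrY E B).ncard : ℤ) - B.ncard} with hS2
  have hne1 : S1.Nonempty := by
    refine ⟨_, {x}, Set.singleton_nonempty x, ?_, rfl⟩
    intro h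
    have : y ∈ nbrX E {x} := h ▸ Set.mem_univ y
    obtain ⟨a, ha, hay⟩ := this
    rw [Set.mem_singleton_iff] at ha
    exact hxy (ha ▸ hay)
  have hne2 : S2.Nonempty := by
    refine ⟨_, {y}, Set.singleton_nonempty y, ?_, rfl⟩
    intro h
    have : x ∈ nbrY E {y} := h ▸ Set.mem_univ x
    obtain ⟨b, hb, hxb⟩ := this
    rw [Set.mem_singleton_iff] at hb
    exact hxy (hb ▸ hxb)
  have hbdd1 : BddBelow S1 := nbr_bdd E
  have hbdd2 : BddBelow S2 := by
    have := nbr_bdd (fun b a => E a b)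
    simpa [nbrX_flip, nbrY_flip] using this
  -- key inequalities
  have key12 : sInf S2 ≤ sInf S1 + Fintype.card X - Fintype.card Y := by
    have : sInf S2 - Fintype.card X + Fintype.card Y ≤ sInf S1 := by
      apply le_csInf hne1
      rintro d ⟨A, hA, hN, rfl⟩
      obtain ⟨B, hB, hBN, hle⟩ := nbr_aux E A hA hN
      have : sInf S2 ≤ ((nbrY E B).ncard : ℤ) - B.ncard := csInf_le hbdd2 ⟨B, hB, hBN, rfl⟩
      omega
    omega
  have key21 : sInf S1 ≤ sInf S2 + Fintype.card Y - Fintype.card X := by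
    have : sInf S1 - Fintype.card Y + Fintype.card X ≤ sInf S2 := by
      apply le_csInf hne2
      rintro d ⟨B, hB, hN, rfl⟩
      obtain ⟨A, hA, hAN, hle⟩ := nbr_aux (fun b a => E a b) B hB (by rwa [nbrX_flip])
      have hle' : ((nbrX E A).ncard : ℤ) - A.ncard ≤
          (((nbrY E B).ncard : ℤ) - B.ncard) + Fintype.card Y - Fintype.card X := hle
      have hAN' : nbrX E A ≠ Set.univ := hAN
      clear hle hAN
      have : sInf S1 ≤ ((nbrX E A).ncard : ℤ) - A.ncard := csInf_le hbdd1 ⟨A, hA, hAN', rfl⟩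
      omega
    omega
  omega
end

section
/- Let G be a non-complete bipartite graph with parts X and Y, and let F(X) be the set of intersections with X of maximum-sized nontrivial independent sets. If A ∈ F(X) then Y \ N(A) ∈ F(Y) and N(Y \ N(A)) = X \ A. -/
/-- `(A, B)` is a nontrivial independent set of the bipartite graph `E`:
both parts are non-empty and there are no edges between them. -/
def NontrivIndep {X Y : Type*} (E : X → Y → Prop) (A : Set X) (B : Set Y) : Prop :=
  A.Nonempty ∧ B.Nonempty ∧ ∀ a ∈ A, ∀ b ∈ B, ¬ E a b

/-- `A` is the trace on `X` of a maximum-sized nontrivial independent set. -/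
def FragX {X Y : Type*} (E : X → Y → Prop) (A : Set X) : Prop :=
  ∃ B : Set Y, NontrivIndep E A B ∧
    ∀ (A' : Set X) (B' : Set Y), NontrivIndep E A' B' →
      A'.ncard + B'.ncard ≤ A.ncard + B.ncard

/-- `B` is the trace on `Y` of a maximum-sized nontrivial independent set. -/
def FragY {X Y : Type*} (E : X → Y → Prop) (B : Set Y) : Prop :=
  ∃ A : Set X, NontrivIndep E A B ∧
    ∀ (A' : Set X) (B' : Set Y), NontrivIndep E A' B' →
      A'.ncard + B'.ncard ≤ A.ncard + B.ncard

theorem stmt4 {X Y : Type*} [Fintype X] [Fintype Y] (E : X → Y → Prop)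
    (hnc : ∃ x y, ¬ E x y) (A : Set X) (hA : FragX E A) :
    FragY E ((nbrX E A)ᶜ) ∧ nbrY E ((nbrX E A)ᶜ) = Aᶜ := by
  obtain ⟨B, ⟨hAne, hBne, hind⟩, hmax⟩ := hA
  -- B ⊆ (nbrX E A)ᶜ
  have hBsub : B ⊆ (nbrX E A)ᶜ := by
    intro b hb ⟨a, ha, hab⟩
    exact hind a ha b hb hab
  have hcne : ((nbrX E A)ᶜ).Nonempty := hBne.mono hBsub
  have hindc : NontrivIndep E A ((nbrX E A)ᶜ) := by
    refine ⟨hAne, hcne, fun a ha b hb hab => hb ⟨a, ha, hab⟩⟩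
  have hBle : B.ncard ≤ ((nbrX E A)ᶜ).ncard :=
    Set.ncard_le_ncard hBsub (Set.toFinite _)
  have hmax' : ∀ (A' : Set X) (B' : Set Y), NontrivIndep E A' B' →
      A'.ncard + B'.ncard ≤ A.ncard + ((nbrX E A)ᶜ).ncard := by
    intro A' B' h
    exact (hmax A' B' h).trans (by omega)
  constructor
  · exact ⟨A, hindc, hmax'⟩
  · ext x
    simp only [nbrY, Set.mem_setOf_eq, Set.mem_compl_iff]
    constructor
    · rintro ⟨b, hb, hxb⟩ hxA
      exact hb ⟨x, hxA, hxb⟩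
    · intro hxA
      by_contra h
      push_neg at h
      have hind2 : NontrivIndep E (insert x A) ((nbrX E A)ᶜ) := by
        refine ⟨⟨x, Set.mem_insert _ _⟩, hcne, ?_⟩
        rintro a (rfl | ha) b hb hab
        · exact h b hb hab
        · exact hb ⟨a, ha, hab⟩
      have := hmax' _ _ hind2
      rw [Set.ncard_insert_of_notMem hxA (Set.toFinite _)] at this
      omega
end

section
/- Let G be a non-complete bipartite graph with parts X and Y. If A, B ∈ F(X), A ∩ B ≠ ∅, and N(A ∪ B) ≠ Y, then both A ∩ B and A ∪ B are in F(X). -/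
lemma indep_compl {X Y : Type*} (E : X → Y → Prop) (S : Set X)
    (h1 : S.Nonempty) (h2 : (nbrX E S)ᶜ.Nonempty) :
    NontrivIndep E S (nbrX E S)ᶜ :=
  ⟨h1, h2, fun a ha b hb hab => hb ⟨a, ha, hab⟩⟩

lemma nbrX_mono {X Y : Type*} (E : X → Y → Prop) {S T : Set X} (h : S ⊆ T) :
    nbrX E S ⊆ nbrX E T := fun _ ⟨a, ha, hab⟩ => ⟨a, h ha, hab⟩

lemma nbrX_union {X Y : Type*} (E : X → Y → Prop) (S T : Set X) :
    nbrX E (S ∪ T) = nbrX E S ∪ nbrX E T := by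
  ext y
  constructor
  · rintro ⟨a, ha | ha, hab⟩
    · exact Or.inl ⟨a, ha, hab⟩
    · exact Or.inr ⟨a, ha, hab⟩
  · rintro (⟨a, ha, hab⟩ | ⟨a, ha, hab⟩)
    · exact ⟨a, Or.inl ha, hab⟩
    · exact ⟨a, Or.inr ha, hab⟩

theorem stmt5 {X Y : Type*} [Fintype X] [Fintype Y] (E : X → Y → Prop)
    (hnc : ∃ x y, ¬ E x y) (A B : Set X)
    (hA : FragX E A) (hB : FragX E B)
    (hAB : (A ∩ B).Nonempty) (hN : nbrX E (A ∪ B) ≠ Set.univ) :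
    FragX E (A ∩ B) ∧ FragX E (A ∪ B) := by
  obtain ⟨CA, ⟨hAne, hCAne, hAind⟩, hAmax⟩ := hA
  obtain ⟨CB, ⟨hBne, hCBne, hBind⟩, hBmax⟩ := hB
  set P := (nbrX E A)ᶜ with hP
  set Q := (nbrX E B)ᶜ with hQ
  have hCAP : CA ⊆ P := fun b hb ⟨a, ha, hab⟩ => hAind a ha b hb hab
  have hCBQ : CB ⊆ Q := fun b hb ⟨a, ha, hab⟩ => hBind a ha b hb hab
  have hPne : P.Nonempty := hCAne.mono hCAP
  have hQne : Q.Nonempty := hCBne.mono hCBQ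
  -- equal maxima
  have hmAB : A.ncard + CA.ncard = B.ncard + CB.ncard :=
    le_antisymm (hBmax A CA ⟨hAne, hCAne, hAind⟩) (hAmax B CB ⟨hBne, hCBne, hBind⟩)
  set m := A.ncard + CA.ncard with hm
  have hPA : A.ncard + P.ncard = m := by
    have h1 : A.ncard + P.ncard ≤ m := hAmax A P (indep_compl E A hAne hPne)
    have h2 : CA.ncard ≤ P.ncard := Set.ncard_le_ncard hCAP (Set.toFinite P)
    omega
  have hQB : B.ncard + Q.ncard = m := by
    have h1 : B.ncard + Q.ncard ≤ m := hAmax B Q (indep_compl E B hBne hQne)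
    have h2 : CB.ncard ≤ Q.ncard := Set.ncard_le_ncard hCBQ (Set.toFinite Q)
    omega
  -- the two candidate pairs
  have hIcompl : P ∪ Q ⊆ (nbrX E (A ∩ B))ᶜ := by
    rintro y (hy | hy) hy'
    · exact hy (nbrX_mono E Set.inter_subset_left hy')
    · exact hy (nbrX_mono E Set.inter_subset_right hy')
  have hUcompl : (nbrX E (A ∪ B))ᶜ = P ∩ Q := by
    rw [nbrX_union, Set.compl_union]
  have hUne : (P ∩ Q).Nonempty := by
    rw [← hUcompl]; exact Set.nonempty_compl.mpr hN
  have hIne : ((nbrX E (A ∩ B))ᶜ).Nonempty := hPne.mono (Set.subset_union_left.trans hIcompl)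
  have hindI : NontrivIndep E (A ∩ B) (nbrX E (A ∩ B))ᶜ := indep_compl E (A ∩ B) hAB hIne
  have hindU : NontrivIndep E (A ∪ B) (P ∩ Q) := by
    rw [← hUcompl]
    exact indep_compl E (A ∪ B) (hAne.mono Set.subset_union_left)
      (hUcompl ▸ hUne)
  have s1le : (A ∩ B).ncard + ((nbrX E (A ∩ B))ᶜ).ncard ≤ m := hAmax _ _ hindI
  have s2le : (A ∪ B).ncard + (P ∩ Q).ncard ≤ m := hAmax _ _ hindU
  have hsumX : (A ∩ B).ncard + (A ∪ B).ncard = A.ncard + B.ncard :=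
    Set.ncard_inter_add_ncard_union A B (Set.toFinite A) (Set.toFinite B)
  have hsumY : (P ∪ Q).ncard + (P ∩ Q).ncard = P.ncard + Q.ncard :=
    Set.ncard_union_add_ncard_inter P Q (Set.toFinite P) (Set.toFinite Q)
  have hIle : (P ∪ Q).ncard ≤ ((nbrX E (A ∩ B))ᶜ).ncard :=
    Set.ncard_le_ncard hIcompl (Set.toFinite _)
  have key : (A ∩ B).ncard + ((nbrX E (A ∩ B))ᶜ).ncard = m ∧
      (A ∪ B).ncard + (P ∩ Q).ncard = m := by
    constructor <;> omega
  exact ⟨⟨(nbrX E (A ∩ B))ᶜ, hindI, fun A' B' h => key.1 ▸ hAmax A' B' h⟩,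
    ⟨P ∩ Q, hindU, fun A' B' h => key.2 ▸ hAmax A' B' h⟩⟩
end

section
/- Let G be a non-complete bipartite graph with parts X and Y, and Γ an automorphism group of G stabilizing X. Suppose A ∈ F(X), γ ∈ Γ satisfies γ(A) ∩ A ≠ ∅, and |A| ≤ |Y \ N(A)|. Then both A ∪ γ(A) and A ∩ γ(A) lie in F(X). -/
theorem stmt6 {X Y : Type*} [Fintype X] [Fintype Y] (E : X → Y → Prop)
    (hnc : ∃ x y, ¬ E x y)
    -- `(σ, τ)` is an automorphism of the bipartite graph stabilizing `X`
    (σ : X ≃ X) (τ : Y ≃ Y) (hστ : ∀ x y, E (σ x) (τ y) ↔ E x y)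
    (A : Set X) (hA : FragX E A)
    (hmeet : (σ '' A ∩ A).Nonempty)
    -- `|A| ≤ |φ(A)|` where `φ(A) = Y \ N(A)`
    (hle : A.ncard ≤ ((nbrX E A)ᶜ).ncard) :
    FragX E (A ∪ σ '' A) ∧ FragX E (A ∩ σ '' A) := by
  obtain ⟨B, ⟨hAne, hBne, hind⟩, hmax⟩ := hA
  set S : Set X := σ '' A with hS
  set T : Set Y := τ '' B with hT
  -- B ⊆ complement of neighborhood of A
  have hBsub : B ⊆ (nbrX E A)ᶜ := by
    intro y hy hmem
    obtain ⟨a, ha, hE⟩ := hmem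
    exact hind a ha y hy hE
  -- (A, (nbrX E A)ᶜ) is nontrivial independent
  have hindc : NontrivIndep E A (nbrX E A)ᶜ := by
    refine ⟨hAne, ⟨hBne.choose, hBsub hBne.choose_spec⟩, ?_⟩
    intro a ha b hb hE
    exact hb ⟨a, ha, hE⟩
  have hBcard : ((nbrX E A)ᶜ).ncard ≤ B.ncard := by
    have := hmax A ((nbrX E A)ᶜ) hindc
    omega
  have hAB : A.ncard ≤ B.ncard := hle.trans hBcard
  -- S and T independence
  have hindST : ∀ a ∈ S, ∀ b ∈ T, ¬ E a b := by
    rintro a ⟨a', ha', rfl⟩ b ⟨b', hb', rfl⟩ hE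
    exact hind a' ha' b' hb' ((hστ a' b').mp hE)
  have hScard : S.ncard = A.ncard := Set.ncard_image_of_injective A σ.injective
  have hTcard : T.ncard = B.ncard := Set.ncard_image_of_injective B τ.injective
  have hASmeet : (A ∩ S).Nonempty := by
    obtain ⟨x, hx1, hx2⟩ := hmeet
    exact ⟨x, hx2, hx1⟩
  -- independence of the intersection pair
  have hindInter : NontrivIndep E (A ∩ S) (B ∪ T) := by
    refine ⟨hASmeet, ⟨hBne.choose, Or.inl hBne.choose_spec⟩, ?_⟩
    rintro a ⟨haA, haS⟩ b (hb | hb)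
    · exact hind a haA b hb
    · exact hindST a haS b hb
  have hmaxInter := hmax _ _ hindInter
  -- B ∩ T is nonempty
  have hBTmeet : (B ∩ T).Nonempty := by
    by_contra h
    have hdisj : Disjoint B T := by
      rw [Set.disjoint_iff_inter_eq_empty]
      exact Set.not_nonempty_iff_eq_empty.mp h
    have hu : (B ∪ T).ncard = B.ncard + T.ncard :=
      Set.ncard_union_eq hdisj (Set.toFinite _) (Set.toFinite _)
    have hpos : 0 < (A ∩ S).ncard :=
      (Set.ncard_pos (Set.toFinite _)).mpr hASmeet
    omega
  -- independence of the union pair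
  have hindUnion : NontrivIndep E (A ∪ S) (B ∩ T) := by
    refine ⟨⟨hAne.choose, Or.inl hAne.choose_spec⟩, hBTmeet, ?_⟩
    rintro a (ha | ha) b ⟨hbB, hbT⟩
    · exact hind a ha b hbB
    · exact hindST a ha b hbT
  have hmaxUnion := hmax _ _ hindUnion
  -- submodularity
  have hAsum : (A ∪ S).ncard + (A ∩ S).ncard = A.ncard + S.ncard :=
    Set.ncard_union_add_ncard_inter A S (Set.toFinite _) (Set.toFinite _)
  have hBsum : (B ∪ T).ncard + (B ∩ T).ncard = B.ncard + T.ncard :=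
    Set.ncard_union_add_ncard_inter B T (Set.toFinite _) (Set.toFinite _)
  have hUeq : (A ∪ S).ncard + (B ∩ T).ncard = A.ncard + B.ncard := by omega
  have hIeq : (A ∩ S).ncard + (B ∪ T).ncard = A.ncard + B.ncard := by omega
  constructor
  · exact ⟨B ∩ T, hindUnion, fun A' B' h => (hmax A' B' h).trans (le_of_eq hUeq.symm)⟩
  · exact ⟨B ∪ T, hindInter, fun A' B' h => (hmax A' B' h).trans (le_of_eq hIeq.symm)⟩
end

section
/- Let n, t, r, s be positive integers with t ≤ min{r,s}, r + s − t < n, and r < r' ≤ n. Fix an r-set x = [r] and an (r')-set x' = [r'] in [n]. Then the number of s-subsets y of [n] with |y ∩ x| ≥ t is at most the number of s-subsets y with |y ∩ x'| ≥ t, minus t(s − t + 1). -/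
theorem stmt7 (n t r r' s : ℕ) (ht : 0 < t) (htr : t ≤ r) (hts : t ≤ s)
    (hrr' : r < r') (hr'n : r' ≤ n) (hrs : r + s - t < n) (hr's : r' + s - t < n)
    (x x' : Finset (Fin n)) (hxx' : x ⊆ x')
    (hx : x.card = r) (hx' : x'.card = r') :
    ((Finset.univ.powersetCard s).filter (fun y => t ≤ (y ∩ x).card)).card
        + t * (s - t + 1)
      ≤ ((Finset.univ.powersetCard s).filter (fun y => t ≤ (y ∩ x').card)).card := by
  classical
  -- pick a t-element subset of x
  obtain ⟨base, hbx, hbcard⟩ : ∃ b ⊆ x, b.card = t :=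
    Finset.exists_subset_card_eq (by omega)
  -- pick a ∈ x' \ x
  obtain ⟨a, hax', hax⟩ : ∃ a ∈ x', a ∉ x := by
    have : x ⊂ x' := lt_of_le_of_ne hxx' (by intro h; subst h; omega)
    exact Finset.exists_of_ssubset this
  -- pick a pool P of size s - t + 1 outside x'
  obtain ⟨P, hPc, hPcard⟩ : ∃ P ⊆ x'ᶜ, P.card = s - t + 1 := by
    apply Finset.exists_subset_card_eq
    rw [Finset.card_compl, Fintype.card_fin, hx']
    omega
  have hPx' : ∀ b ∈ P, b ∉ x' := fun b hb => by
    have := hPc hb; simpa using this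
  have hPx : ∀ b ∈ P, b ∉ x := fun b hb hbx2 => hPx' b hb (hxx' hbx2)
  have habase : a ∉ base := fun h => hax (hbx h)
  have haP : a ∉ P := fun h => hPx' a h hax'
  have hbasex' : base ⊆ x' := hbx.trans hxx'
  -- the injection
  set f : Fin n × Fin n → Finset (Fin n) :=
    fun kp => insert a ((base.erase kp.1) ∪ (P.erase kp.2)) with hf
  have key : ∀ k ∈ base, ∀ p ∈ P,
      (f (k, p)).card = s ∧ (f (k, p) ∩ x').card = t ∧ (f (k, p) ∩ x).card = t - 1 := by
    intro k hk p hp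
    have h1 : a ∉ (base.erase k) ∪ (P.erase p) := by
      simp only [Finset.mem_union, Finset.mem_erase, not_or]
      exact ⟨fun h => habase h.2, fun h => haP h.2⟩
    have h2 : Disjoint (base.erase k) (P.erase p) := by
      apply Finset.disjoint_left.mpr
      intro b hb hb2
      exact hPx b (Finset.mem_of_mem_erase hb2) (hbx (Finset.mem_of_mem_erase hb))
    have hce : (base.erase k).card = t - 1 := by
      rw [Finset.card_erase_of_mem hk, hbcard]
    have hpe : (P.erase p).card = s - t := by
      rw [Finset.card_erase_of_mem hp, hPcard]
      omega
    refine ⟨?_, ?_, ?_⟩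
    · rw [hf]
      simp only
      rw [Finset.card_insert_of_notMem h1, Finset.card_union_of_disjoint h2, hce, hpe]
      omega
    · have : f (k, p) ∩ x' = insert a (base.erase k) := by
        ext b
        simp only [hf, Finset.mem_inter, Finset.mem_insert, Finset.mem_union,
          Finset.mem_erase]
        constructor
        · rintro ⟨h | h | h, hbx'⟩
          · exact Or.inl h
          · exact Or.inr h
          · exact absurd hbx' (hPx' b h.2)
        · rintro (h | h)
          · subst h; exact ⟨Or.inl rfl, hax'⟩
          · exact ⟨Or.inr (Or.inl h), hbasex' h.2⟩
      rw [this, Finset.card_insert_of_notMem (fun h => habase (Finset.mem_of_mem_erase h)),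
        hce]
      omega
    · have : f (k, p) ∩ x = base.erase k := by
        ext b
        simp only [hf, Finset.mem_inter, Finset.mem_insert, Finset.mem_union,
          Finset.mem_erase]
        constructor
        · rintro ⟨h | h | h, hbx2⟩
          · subst h; exact absurd hbx2 hax
          · exact h
          · exact absurd hbx2 (hPx b h.2)
        · intro h
          exact ⟨Or.inr (Or.inl h), hbx h.2⟩
      rw [this, hce]
  -- injectivity on base ×ˢ P
  have hinj : Set.InjOn f ↑(base ×ˢ P) := by
    rintro ⟨k, p⟩ hkp ⟨k', p'⟩ hkp' heq
    simp only [Finset.mem_coe, Finset.mem_product] at hkp hkp'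
    obtain ⟨hk, hp⟩ := hkp
    obtain ⟨hk', hp'⟩ := hkp'
    have mem_iff : ∀ b, b ∈ f (k, p) ↔ b ∈ f (k', p') := fun b => by rw [heq]
    have hkey : ∀ (u u' : Fin n) (q q' : Fin n), u ∈ base → u' ∈ base → q ∈ P → q' ∈ P →
        f (u, q) = f (u', q') → u = u' := by
      intro u u' q q' hu hu' hq hq' he
      by_contra hne
      have h1 : u ∈ f (u', q') := by
        simp only [hf, Finset.mem_insert, Finset.mem_union, Finset.mem_erase]
        exact Or.inr (Or.inl ⟨hne, hu⟩)
      rw [← he] at h1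
      simp only [hf, Finset.mem_insert, Finset.mem_union, Finset.mem_erase] at h1
      rcases h1 with h | h | h
      · exact habase (h ▸ hu)
      · exact h.1 rfl
      · exact hPx u h.2 (hbx hu)
    have hkeyP : ∀ (u u' : Fin n) (q q' : Fin n), u ∈ base → u' ∈ base → q ∈ P → q' ∈ P →
        f (u, q) = f (u', q') → q = q' := by
      intro u u' q q' hu hu' hq hq' he
      by_contra hne
      have h1 : q ∈ f (u', q') := by
        simp only [hf, Finset.mem_insert, Finset.mem_union, Finset.mem_erase]
        exact Or.inr (Or.inr ⟨hne, hq⟩)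
      rw [← he] at h1
      simp only [hf, Finset.mem_insert, Finset.mem_union, Finset.mem_erase] at h1
      rcases h1 with h | h | h
      · exact haP (h ▸ hq)
      · exact hPx q hq (hbx h.2)
      · exact h.1 rfl
    exact Prod.ext (hkey k k' p p' hk hk' hp hp' heq) (hkeyP k k' p p' hk hk' hp hp' heq)
  -- the image
  set D : Finset (Finset (Fin n)) := (base ×ˢ P).image f with hD
  have hDcard : D.card = t * (s - t + 1) := by
    rw [hD, Finset.card_image_of_injOn hinj, Finset.card_product, hbcard, hPcard]
  set B := (Finset.univ.powersetCard s).filter (fun y => t ≤ (y ∩ x').card) with hB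
  set p : Finset (Fin n) → Prop := fun y => t ≤ (y ∩ x).card with hp
  have hDsub : D ⊆ B.filter (fun y => ¬ p y) := by
    intro y hy
    rw [hD] at hy
    obtain ⟨⟨k, pp⟩, hkp, rfl⟩ := Finset.mem_image.mp hy
    rw [Finset.mem_product] at hkp
    obtain ⟨hc, hcx', hcx⟩ := key k hkp.1 pp hkp.2
    rw [Finset.mem_filter, hB, Finset.mem_filter, Finset.mem_powersetCard_univ]
    refine ⟨⟨hc, by rw [hcx']⟩, ?_⟩
    rw [hp]
    simp only
    rw [hcx]
    omega
  have hAeq : (Finset.univ.powersetCard s).filter (fun y => t ≤ (y ∩ x).card)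
      = B.filter p := by
    rw [hB, Finset.filter_filter]
    refine Finset.filter_congr fun y _ => ?_
    simp only [hp]
    constructor
    · intro h
      exact ⟨h.trans (Finset.card_le_card (Finset.inter_subset_inter_left hxx')), h⟩
    · exact And.right
  rw [hAeq, ← hDcard]
  calc (B.filter p).card + D.card
      ≤ (B.filter p).card + (B.filter (fun y => ¬ p y)).card :=
        Nat.add_le_add_left (Finset.card_le_card hDsub) _
    _ = B.card := Finset.card_filter_add_card_filter_not _
end

section
/- Let n, t, r, s be positive integers with t ≤ s ≤ r and r + s − t < n. For any two distinct r-subsets x, x' of [n], the number of s-subsets y of [n] satisfying both |y ∩ x| ≥ t and |y ∩ x'| ≥ t is strictly less than the number of s-subsets y satisfying |y ∩ x| ≥ t. -/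
theorem stmt8 (n t r s : ℕ) (ht : 0 < t) (hts : t ≤ s) (hsr : s ≤ r)
    (hrs : r + s - t < n)
    (x x' : Finset (Fin n)) (hne : x ≠ x')
    (hx : x.card = r) (hx' : x'.card = r) :
    ((Finset.univ.powersetCard s).filter
        (fun y => t ≤ (y ∩ x).card ∧ t ≤ (y ∩ x').card)).card
      < ((Finset.univ.powersetCard s).filter (fun y => t ≤ (y ∩ x).card)).card := by
  classical
  have hxx : (x \ x').Nonempty := by
    rw [Finset.sdiff_nonempty]
    intro h
    exact hne (Finset.eq_of_subset_of_card_le h (by rw [hx, hx']))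
  set k := min (x ∩ x').card (t - 1) with hk
  have hkor : k = (x ∩ x').card ∨ k = t - 1 := min_choice _ _
  have hk1 : k ≤ t - 1 := min_le_right _ _
  have hkc : k ≤ (x ∩ x').card := min_le_left _ _
  obtain ⟨A1, hA1sub, hA1card⟩ := Finset.exists_subset_card_eq hkc
  have hsd : (x \ x').card + (x ∩ x').card = r := by
    rw [Finset.card_sdiff_add_card_inter, hx]
  have hxxpos : 0 < (x \ x').card := hxx.card_pos
  have hA2le : t - k ≤ (x \ x').card := by omega
  obtain ⟨A2, hA2sub, hA2card⟩ := Finset.exists_subset_card_eq hA2le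
  have hsd' : (x' \ x).card + (x' ∩ x).card = r := by
    rw [Finset.card_sdiff_add_card_inter, hx']
  have hixx : (x' ∩ x).card = (x ∩ x').card := by rw [Finset.inter_comm]
  have hEle : t - 1 - k ≤ (x' \ x).card := by omega
  obtain ⟨E, hEsub, hEcard⟩ := Finset.exists_subset_card_eq hEle
  set A := A1 ∪ A2 with hA
  have hA1x : A1 ⊆ x := hA1sub.trans Finset.inter_subset_left
  have hA1x' : A1 ⊆ x' := hA1sub.trans Finset.inter_subset_right
  have hdisj12 : Disjoint A1 A2 := by
    rw [Finset.disjoint_left]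
    intro a ha1 ha2
    exact (Finset.mem_sdiff.1 (hA2sub ha2)).2 (hA1x' ha1)
  have hAcard : A.card = t := by
    rw [hA, Finset.card_union_of_disjoint hdisj12, hA1card, hA2card]
    omega
  have hAx : A ⊆ x := Finset.union_subset hA1x (hA2sub.trans Finset.sdiff_subset)
  have hUA : x' ∪ A = x' ∪ A2 := by
    rw [hA, ← Finset.union_assoc, Finset.union_eq_left.2 hA1x']
  have hdx'A2 : Disjoint x' A2 := by
    rw [Finset.disjoint_right]
    intro a ha
    exact (Finset.mem_sdiff.1 (hA2sub ha)).2
  have hUAcard : (x' ∪ A).card = r + (t - k) := by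
    rw [hUA, Finset.card_union_of_disjoint hdx'A2, hx', hA2card]
  set P := (Finset.univ \ (x' ∪ A)) ∪ E with hP
  have hEdisj : Disjoint (Finset.univ \ (x' ∪ A)) E := by
    rw [Finset.disjoint_right]
    intro a ha hmem
    exact (Finset.mem_sdiff.1 hmem).2
      (Finset.mem_union_left _ ((Finset.mem_sdiff.1 (hEsub ha)).1))
  have hsdcard : (Finset.univ \ (x' ∪ A)).card = n - (r + (t - k)) := by
    rw [Finset.card_sdiff_of_subset (Finset.subset_univ _), hUAcard, Finset.card_univ,
      Fintype.card_fin]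
  have hPcard : P.card = (n - (r + (t - k))) + (t - 1 - k) := by
    rw [hP, Finset.card_union_of_disjoint hEdisj, hsdcard, hEcard]
  have hBle : s - t ≤ P.card := by omega
  obtain ⟨B, hBsub, hBcard⟩ := Finset.exists_subset_card_eq hBle
  have hABdisj : Disjoint A B := by
    rw [Finset.disjoint_left]
    intro a haA haB
    rcases Finset.mem_union.1 (hBsub haB) with h | h
    · exact (Finset.mem_sdiff.1 h).2 (Finset.mem_union_right _ haA)
    · exact (Finset.mem_sdiff.1 (hEsub h)).2 (hAx haA)
  set y : Finset (Fin n) := A ∪ B with hy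
  have hycard : y.card = s := by
    rw [hy, Finset.card_union_of_disjoint hABdisj, hAcard, hBcard]
    omega
  have hy1 : t ≤ (y ∩ x).card := by
    have : A ⊆ y ∩ x := Finset.subset_inter Finset.subset_union_left hAx
    calc t = A.card := hAcard.symm
    _ ≤ _ := Finset.card_le_card this
  have hy2sub : y ∩ x' ⊆ A1 ∪ E := by
    intro a ha
    obtain ⟨hay, hax'⟩ := Finset.mem_inter.1 ha
    rcases Finset.mem_union.1 hay with h | h
    · rcases Finset.mem_union.1 h with h1 | h2
      · exact Finset.mem_union_left _ h1
      · exact absurd hax' (Finset.mem_sdiff.1 (hA2sub h2)).2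
    · rcases Finset.mem_union.1 (hBsub h) with h1 | h2
      · exact absurd (Finset.mem_union_left _ hax') (Finset.mem_sdiff.1 h1).2
      · exact Finset.mem_union_right _ h2
  have hy2 : ¬ t ≤ (y ∩ x').card := by
    have h1 : (y ∩ x').card ≤ A1.card + E.card :=
      (Finset.card_le_card hy2sub).trans (Finset.card_union_le _ _)
    rw [hA1card, hEcard] at h1
    omega
  have hymem : y ∈ Finset.univ.powersetCard s := by
    rw [Finset.mem_powersetCard_univ]
    exact hycard
  apply Finset.card_lt_card
  have hsub : (Finset.univ.powersetCard s).filter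
        (fun y => t ≤ (y ∩ x).card ∧ t ≤ (y ∩ x').card) ⊆
      (Finset.univ.powersetCard s).filter (fun y => t ≤ (y ∩ x).card) := by
    intro z hz
    rw [Finset.mem_filter] at hz ⊢
    exact ⟨hz.1, hz.2.1⟩
  rw [Finset.ssubset_iff_of_subset hsub]
  exact ⟨y, Finset.mem_filter.2 ⟨hymem, hy1⟩,
    fun hmem => hy2 (Finset.mem_filter.1 hmem).2.2⟩
end

section
/- Let n = 2r with r ≥ 2, let t, s be positive integers with t ≤ min{r,s} and r + s − t < n, and let x be an r-subset of [n] with complement x̄ = [n]\x. Then the number of s-subsets y with |y ∩ x| ≥ t and |y ∩ x̄| ≥ t is at most (number of s-subsets y with |y ∩ x| ≥ t) − 1; moreover if r ≠ s, or r = s and t > 1 (with s > t), the difference is at least 2. -/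
open Finset

private lemma aux_card9 {α} [DecidableEq α] {A B S : Finset α} (hAB : A ⊆ B) (hS : S ⊆ B)
    (hdis : Disjoint A S) : A.card + S.card ≤ B.card := by
  rw [← card_union_of_disjoint hdis]
  exact card_le_card (union_subset hAB hS)

private lemma two_subsets9 {α} [DecidableEq α] (z : Finset α) (k : ℕ) (hk : 0 < k)
    (hkz : k < z.card) : ∃ c d : Finset α, c ⊆ z ∧ d ⊆ z ∧ c.card = k ∧ d.card = k ∧ c ≠ d := by
  obtain ⟨c, hc, hcc⟩ := exists_subset_card_eq (le_of_lt hkz)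
  obtain ⟨u, hu⟩ : (z \ c).Nonempty := by
    rw [← card_pos, card_sdiff_of_subset hc]; omega
  obtain ⟨v, hv⟩ : c.Nonempty := card_pos.mp (by omega)
  have huz : u ∈ z := (mem_sdiff.mp hu).1
  have huc : u ∉ c := (mem_sdiff.mp hu).2
  refine ⟨c, insert u (c.erase v), hc, ?_, hcc, ?_, ?_⟩
  · exact insert_subset huz ((erase_subset _ _).trans hc)
  · rw [card_insert_of_notMem (fun h => huc (erase_subset _ _ h)), card_erase_of_mem hv]
    omega
  · intro h
    exact huc (h ▸ mem_insert_self u _)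

theorem stmt9 (n t r s : ℕ) (hn : n = 2 * r) (hr : 2 ≤ r)
    (ht : 0 < t) (htr : t ≤ r) (hts : t ≤ s) (hrs : r + s - t < n)
    (x : Finset (Fin n)) (hx : x.card = r) :
    ((Finset.univ.powersetCard s).filter
          (fun y => t ≤ (y ∩ x).card ∧ t ≤ (y ∩ xᶜ).card)).card + 1
        ≤ ((Finset.univ.powersetCard s).filter (fun y => t ≤ (y ∩ x).card)).card ∧
      (r ≠ s ∨ (r = s ∧ 1 < t ∧ t < s) →
        ((Finset.univ.powersetCard s).filter
            (fun y => t ≤ (y ∩ x).card ∧ t ≤ (y ∩ xᶜ).card)).card + 2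
          ≤ ((Finset.univ.powersetCard s).filter (fun y => t ≤ (y ∩ x).card)).card) := by
  classical
  set A := (Finset.univ.powersetCard s).filter
      (fun y => t ≤ (y ∩ x).card ∧ t ≤ (y ∩ xᶜ).card) with hAdef
  set B := (Finset.univ.powersetCard s).filter (fun y => t ≤ (y ∩ x).card) with hBdef
  have hAB : A ⊆ B := by
    intro y hy
    simp only [hAdef, hBdef, mem_filter] at hy ⊢
    exact ⟨hy.1, hy.2.1⟩
  have hxc : xᶜ.card = r := by
    rw [card_compl, Fintype.card_fin, hx]; omega
  -- key membership lemma
  have hinter : ∀ a b : Finset (Fin n), a ⊆ x → b ⊆ xᶜ →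
      (a ∪ b) ∩ x = a ∧ (a ∪ b) ∩ xᶜ = b := by
    intro a b ha hb
    have hbx : b ∩ x = ∅ := by
      rw [← disjoint_iff_inter_eq_empty]
      exact (disjoint_compl_left.mono_left hb).symm.symm
    have haxc : a ∩ xᶜ = ∅ := by
      rw [← disjoint_iff_inter_eq_empty]
      exact disjoint_compl_right.mono_left ha
    constructor
    · rw [union_inter_distrib_right, inter_eq_left.mpr ha, hbx, union_empty]
    · rw [union_inter_distrib_right, inter_eq_left.mpr hb, haxc, empty_union]
  have key : ∀ a b : Finset (Fin n), a ⊆ x → b ⊆ xᶜ → a.card + b.card = s →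
      t ≤ a.card → b.card < t → (a ∪ b) ∈ B ∧ (a ∪ b) ∉ A := by
    intro a b ha hb hcard hta htb
    have hdis : Disjoint a b := disjoint_compl_right.mono ha hb
    obtain ⟨h1, h2⟩ := hinter a b ha hb
    have hcu : (a ∪ b).card = s := by rw [card_union_of_disjoint hdis]; exact hcard
    constructor
    · simp only [hBdef, mem_filter, mem_powersetCard_univ]
      exact ⟨hcu, by rw [h1]; exact hta⟩
    · simp only [hAdef, mem_filter, mem_powersetCard_univ, h1, h2]
      intro h
      omega
  -- bound on s - min s r
  have hsr : s - min s r < t ∧ s - min s r ≤ r := by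
    rcases le_total s r with h | h <;> simp [min_eq_left, min_eq_right, h] <;> omega
  -- first element: a of card min s r inside x, b of card s - min s r inside xᶜ
  obtain ⟨a0, ha0, ha0c⟩ := exists_subset_card_eq (show min s r ≤ x.card by rw [hx]; exact min_le_right _ _)
  obtain ⟨b0, hb0, hb0c⟩ := exists_subset_card_eq (show s - min s r ≤ xᶜ.card by rw [hxc]; exact hsr.2)
  have hy0 := key a0 b0 ha0 hb0 (by omega) (by rw [ha0c]; exact le_min hts htr) (by omega)
  constructor
  · have := aux_card9 hAB (singleton_subset_iff.mpr hy0.1)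
      (disjoint_singleton_right.mpr hy0.2)
    simpa using this
  · intro hcase
    -- produce two distinct elements of B \ A
    have main : ∃ y1 y2 : Finset (Fin n), y1 ≠ y2 ∧ y1 ∈ B ∧ y1 ∉ A ∧ y2 ∈ B ∧ y2 ∉ A := by
      rcases lt_trichotomy r s with hlt | heq | hgt
      · -- r < s : a = x, two b's of card s - r
        obtain ⟨c, d, hc, hd, hcc, hdc, hcd⟩ := two_subsets9 xᶜ (s - r) (by omega)
          (by rw [hxc]; omega)
        have h1 := key x c (Subset.refl x) hc (by omega) (by omega) (by omega)
        have h2 := key x d (Subset.refl x) hd (by omega) (by omega) (by omega)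
        refine ⟨x ∪ c, x ∪ d, ?_, h1.1, h1.2, h2.1, h2.2⟩
        intro h
        apply hcd
        have e1 := (hinter x c (Subset.refl x) hc).2
        have e2 := (hinter x d (Subset.refl x) hd).2
        rw [← e1, ← e2, h]
      · -- r = s : use x and (x.erase u) ∪ {v}
        rcases hcase with h | ⟨_, ht1, hts'⟩
        · exact absurd heq h
        obtain ⟨u, hu⟩ : x.Nonempty := card_pos.mp (by omega)
        obtain ⟨v, hv⟩ : xᶜ.Nonempty := card_pos.mp (by omega)
        have h1 := key x ∅ (Subset.refl x) (empty_subset _) (by simp; omega)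
          (by omega) (by simp; omega)
        have h2 := key (x.erase u) {v} (erase_subset _ _) (by simpa using hv)
          (by rw [card_erase_of_mem hu, card_singleton]; omega)
          (by rw [card_erase_of_mem hu]; omega) (by simp; omega)
        refine ⟨x ∪ ∅, x.erase u ∪ {v}, ?_, h1.1, h1.2, h2.1, h2.2⟩
        intro h
        have : v ∈ x ∪ (∅ : Finset (Fin n)) := h ▸ (mem_union_right _ (mem_singleton_self v))
        simp only [union_empty] at this
        exact (mem_compl.mp hv) this
      · -- s < r : two a's of card s inside x, b = ∅
        obtain ⟨c, d, hc, hd, hcc, hdc, hcd⟩ := two_subsets9 x s (by omega) (by omega)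
        have h1 := key c ∅ hc (empty_subset _) (by simp; omega) (by omega) (by simp; omega)
        have h2 := key d ∅ hd (empty_subset _) (by simp; omega) (by omega) (by simp; omega)
        exact ⟨c ∪ ∅, d ∪ ∅, by simpa using hcd, h1.1, h1.2, h2.1, h2.2⟩
    obtain ⟨y1, y2, hne, hy1B, hy1A, hy2B, hy2A⟩ := main
    have hScard : ({y1, y2} : Finset (Finset (Fin n))).card = 2 := by
      rw [card_insert_of_notMem (by simpa using hne), card_singleton]
    have := aux_card9 hAB (by simp [insert_subset_iff, hy1B, hy2B] :
        ({y1, y2} : Finset (Finset (Fin n))) ⊆ B)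
      (by rw [disjoint_right]; intro z hz; simp at hz; rcases hz with h | h <;> subst h <;> assumption)
    rwa [hScard] at this
end

section
/- Let V be an n-dimensional vector space over F_q, let t ≤ s ≤ r be positive integers with r + s − t < n. For any two distinct r-dimensional subspaces x, x' of V, the number of s-dimensional subspaces y with dim(y∩x) ≥ t and dim(y∩x') ≥ t is strictly less than the number of s-dimensional subspaces y with dim(y∩x) ≥ t. -/
open Module Submodule

section Aux
variable {K V : Type*} [Field K] [AddCommGroup V] [Module K V] [FiniteDimensional K V]

lemma finrank_sup_span_singleton' {y : Submodule K V} {v : V} (hv : v ∉ y) :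
    finrank K ↥(y ⊔ K ∙ v) = finrank K y + 1 := by
  have hv0 : v ≠ 0 := fun h => hv (h ▸ y.zero_mem)
  have hd : y ⊓ (K ∙ v) = ⊥ := by
    rw [← disjoint_iff]
    exact (Submodule.disjoint_span_singleton' hv0).mpr hv
  have := Submodule.finrank_sup_add_finrank_inf_eq y (K ∙ v)
  rw [hd, finrank_bot, finrank_span_singleton hv0] at this
  omega

lemma exists_notMem_of_ne_top {y : Submodule K V} (h : y ≠ ⊤) : ∃ v, v ∉ y := by
  by_contra hc
  push_neg at hc
  exact h (eq_top_iff'.mpr hc)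

/-- extend a submodule inside `U` to any intermediate finrank -/
lemma exists_between_finrank (U : Submodule K V) :
    ∀ (m : ℕ) (y : Submodule K V), y ≤ U → ∀ k, finrank K y + m = k → k ≤ finrank K U →
      ∃ z, y ≤ z ∧ z ≤ U ∧ finrank K z = k := by
  intro m
  induction m with
  | zero => intro y hy k hk _; exact ⟨y, le_rfl, hy, by omega⟩
  | succ m ih =>
    intro y hy k hk hkU
    have hne : y ≠ U := by intro h; rw [h] at hk; omega
    obtain ⟨v, hvU, hvy⟩ := SetLike.exists_of_lt (lt_of_le_of_ne hy hne)
    obtain ⟨z, hz1, hz2, hz3⟩ := ih (y ⊔ K ∙ v)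
      (sup_le hy (by rwa [span_singleton_le_iff_mem])) k
      (by rw [finrank_sup_span_singleton' hvy]; omega) hkU
    exact ⟨z, le_trans le_sup_left hz1, hz2, hz3⟩

/-- grow `y` to finrank `s` keeping intersection with `x'` of finrank `< t` -/
lemma grow (x' : Submodule K V) (n r s t : ℕ) (hx' : finrank K x' = r)
    (hn : finrank K V = n) (hbound : r + s + 1 ≤ n + t) (hts : t ≤ s) (hsr : s ≤ r) :
    ∀ (m : ℕ) (y : Submodule K V), finrank K y + m = s →
      finrank K ↥(y ⊓ x') + 1 ≤ t →
      ∃ z, y ≤ z ∧ finrank K z = s ∧ finrank K ↥(z ⊓ x') + 1 ≤ t := by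
  intro m
  induction m with
  | zero => intro y hy hyx; exact ⟨y, le_rfl, by omega, hyx⟩
  | succ m ih =>
    intro y hy hyx
    have hsum := Submodule.finrank_sup_add_finrank_inf_eq y x'
    by_cases htop : y ⊔ x' = ⊤
    · -- intersection is already small, any extension works
      have hytop : y ≠ ⊤ := by
        intro h
        rw [h] at hy
        rw [finrank_top] at hy
        omega
      obtain ⟨v, hv⟩ := exists_notMem_of_ne_top hytop
      rw [htop, finrank_top, hn, hx'] at hsum
      suffices h : finrank K ↥((y ⊔ K ∙ v) ⊓ x') + 1 ≤ t by
        obtain ⟨z, hz1, hz2, hz3⟩ :=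
          ih (y ⊔ K ∙ v) (by rw [finrank_sup_span_singleton' hv]; omega) h
        exact ⟨z, le_trans le_sup_left hz1, hz2, hz3⟩
      have hle : ((y ⊔ K ∙ v) ⊓ x') ⊓ y = y ⊓ x' := by
        rw [inf_comm _ y, ← inf_assoc, inf_eq_left.mpr (le_sup_left : y ≤ y ⊔ K ∙ v)]
      have h3 := Submodule.finrank_sup_add_finrank_inf_eq ((y ⊔ K ∙ v) ⊓ x') y
      have h4 : finrank K ↥(((y ⊔ K ∙ v) ⊓ x') ⊔ y) ≤ finrank K ↥(y ⊔ K ∙ v) :=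
        Submodule.finrank_mono (sup_le inf_le_left le_sup_left)
      rw [hle] at h3
      rw [finrank_sup_span_singleton' hv] at h4
      omega
    · obtain ⟨v, hv⟩ := exists_notMem_of_ne_top htop
      have hvy : v ∉ y := fun h => hv (le_sup_left (a := y) (b := x') h)
      suffices h : finrank K ↥((y ⊔ K ∙ v) ⊓ x') + 1 ≤ t by
        obtain ⟨z, hz1, hz2, hz3⟩ :=
          ih (y ⊔ K ∙ v) (by rw [finrank_sup_span_singleton' hvy]; omega) h
        exact ⟨z, le_trans le_sup_left hz1, hz2, hz3⟩
      have heq : (y ⊔ K ∙ v) ⊓ x' = y ⊓ x' := by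
        refine le_antisymm ?_ (inf_le_inf_right x' le_sup_left)
        rintro w ⟨hw1, hw2⟩
        obtain ⟨a, ha, b, hb, rfl⟩ := Submodule.mem_sup.mp hw1
        obtain ⟨c, rfl⟩ := Submodule.mem_span_singleton.mp hb
        by_cases hc : c = 0
        · subst hc
          simp only [zero_smul, add_zero] at hw2 ⊢
          exact ⟨ha, hw2⟩
        · exfalso
          apply hv
          have : c • v = (a + c • v) - a := (add_sub_cancel_left a (c • v)).symm
          have hcv : c • v ∈ y ⊔ x' :=
            this ▸ sub_mem (Submodule.mem_sup_right hw2) (Submodule.mem_sup_left ha)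
          have := (y ⊔ x').smul_mem c⁻¹ hcv
          rwa [smul_smul, inv_mul_cancel₀ hc, one_smul] at this
      rw [heq]
      exact hyx
end Aux

theorem stmt10 (q n t r s : ℕ)
    (K : Type*) [Field K] [Fintype K] (hK : Fintype.card K = q)
    (V : Type*) [AddCommGroup V] [Module K V] [FiniteDimensional K V]
    (hn : Module.finrank K V = n)
    (ht : 0 < t) (hts : t ≤ s) (hsr : s ≤ r) (hrs : r + s - t < n)
    (x x' : Submodule K V) (hne : x ≠ x')
    (hx : Module.finrank K x = r) (hx' : Module.finrank K x' = r) :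
    Nat.card {y : Submodule K V // Module.finrank K y = s ∧
        t ≤ Module.finrank K ↥(y ⊓ x) ∧ t ≤ Module.finrank K ↥(y ⊓ x')}
      < Nat.card {y : Submodule K V // Module.finrank K y = s ∧
        t ≤ Module.finrank K ↥(y ⊓ x)} := by
  -- construct a witness z with finrank z = s, t ≤ finrank (z ⊓ x), finrank (z ⊓ x') < t
  have hxle : ¬ x ≤ x' := by
    intro h
    exact hne (Submodule.eq_of_le_of_finrank_le h (by omega))
  obtain ⟨v, hvx, hvx'⟩ := SetLike.not_le_iff_exists.mp hxle
  have hv0 : v ≠ 0 := fun h => hvx' (h ▸ x'.zero_mem)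
  obtain ⟨w, hw1, hw2, hw3⟩ := exists_between_finrank x (t - 1) (K ∙ v)
    (by rwa [span_singleton_le_iff_mem]) t
    (by rw [finrank_span_singleton hv0]; omega) (by omega)
  have hvw : v ∈ w := hw1 (Submodule.mem_span_singleton_self v)
  have hwx' : finrank K ↥(w ⊓ x') + 1 ≤ t := by
    have hlt : w ⊓ x' < w := lt_of_le_of_ne inf_le_left (by
      intro h
      rw [← h] at hvw
      exact hvx' hvw.2)
    have := Submodule.finrank_lt_finrank_of_lt hlt
    omega
  obtain ⟨z, hz1, hz2, hz3⟩ := grow x' n r s t hx' hn (by omega) hts hsr (s - t) w (by omega) hwx'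
  have hzx : t ≤ finrank K ↥(z ⊓ x) := by
    have : w ≤ z ⊓ x := le_inf hz1 hw2
    have := Submodule.finrank_mono this
    omega
  -- cardinality comparison
  have hfinV : Finite V := Module.finite_of_finite K
  have hfin : Finite (Submodule K V) :=
    Finite.of_injective (fun p => (p : Set V)) SetLike.coe_injective
  have key : {y : Submodule K V | Module.finrank K y = s ∧
        t ≤ Module.finrank K ↥(y ⊓ x) ∧ t ≤ Module.finrank K ↥(y ⊓ x')}
      ⊂ {y : Submodule K V | Module.finrank K y = s ∧
        t ≤ Module.finrank K ↥(y ⊓ x)} := by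
    rw [Set.ssubset_def]
    refine ⟨fun y hy => ⟨hy.1, hy.2.1⟩, fun h => ?_⟩
    have hzmem : z ∈ {y : Submodule K V | Module.finrank K ↥y = s ∧
        t ≤ Module.finrank K ↥(y ⊓ x)} := ⟨hz2, hzx⟩
    obtain ⟨_, _, h3⟩ := h hzmem
    omega
  have h1 : Nat.card {y : Submodule K V // Module.finrank K y = s ∧
        t ≤ Module.finrank K ↥(y ⊓ x) ∧ t ≤ Module.finrank K ↥(y ⊓ x')}
      = Set.ncard {y : Submodule K V | Module.finrank K y = s ∧
        t ≤ Module.finrank K ↥(y ⊓ x) ∧ t ≤ Module.finrank K ↥(y ⊓ x')} := by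
    rw [← Nat.card_coe_set_eq]; rfl
  have h2 : Nat.card {y : Submodule K V // Module.finrank K y = s ∧
        t ≤ Module.finrank K ↥(y ⊓ x)}
      = Set.ncard {y : Submodule K V | Module.finrank K y = s ∧
        t ≤ Module.finrank K ↥(y ⊓ x)} := by
    rw [← Nat.card_coe_set_eq]; rfl
  rw [h1, h2]
  exact Set.ncard_lt_ncard key (Set.toFinite _)
end

section
/- Let V be an n-dimensional vector space over F_q, let t be a positive integer, and let r < r' and s be positive integers with t ≤ min{r,s} and r' + s − t < n. If x ⊆ x' are subspaces of V with dim x = r and dim x' = r', then the number of s-dimensional subspaces y with dim(y ∩ x) ≥ t is at most (the number of s-dimensional subspaces y with dim(y ∩ x') ≥ t) − 2. -/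
open Module Submodule

/-- There is a subspace of any dimension up to `finrank W` inside `W`. -/
lemma aux_exists_le_finrank {K V : Type*} [Field K] [AddCommGroup V] [Module K V]
    [FiniteDimensional K V] (W : Submodule K V) (k : ℕ) (hk : k ≤ Module.finrank K W) :
    ∃ w : Submodule K V, w ≤ W ∧ Module.finrank K w = k := by
  obtain ⟨f, hf⟩ := exists_linearIndependent_of_le_finrank (R := K) (M := W) hk
  have hf2 : LinearIndependent K (W.subtype ∘ f) := hf.map' W.subtype (ker_subtype W)
  refine ⟨span K (Set.range (W.subtype ∘ f)), ?_, ?_⟩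
  · rw [span_le]; rintro _ ⟨i, rfl⟩; exact (f i).2
  · rw [finrank_span_eq_card hf2, Fintype.card_fin]

/-- If `w₀ ≤ x` and `v ∉ x`, then `(w₀ ⊔ span {v}) ⊓ x ≤ w₀`. -/
lemma aux_sup_span_inf {K V : Type*} [Field K] [AddCommGroup V] [Module K V]
    {x w₀ : Submodule K V} {v : V} (hw₀ : w₀ ≤ x) (hv : v ∉ x) :
    (w₀ ⊔ span K {v}) ⊓ x ≤ w₀ := by
  rintro u ⟨hu1, hu2⟩
  rcases Submodule.mem_sup.mp hu1 with ⟨a, ha, b, hb, rfl⟩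
  rcases Submodule.mem_span_singleton.mp hb with ⟨c, rfl⟩
  rcases eq_or_ne c 0 with rfl | hc
  · simpa using ha
  · exfalso
    apply hv
    have hcv : c • v ∈ x := by
      have := Submodule.sub_mem x hu2 (hw₀ ha)
      simpa using this
    have : c⁻¹ • (c • v) ∈ x := Submodule.smul_mem x _ hcv
    rwa [smul_smul, inv_mul_cancel₀ hc, one_smul] at this

/-- If `w ≤ x'` and `c ⊓ x' = ⊥`, then `(w ⊔ c) ⊓ x' = w`. -/
lemma aux_sup_inf_eq {K V : Type*} [Field K] [AddCommGroup V] [Module K V]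
    {x' w c : Submodule K V} (hw : w ≤ x') (hc : c ⊓ x' = ⊥) :
    (w ⊔ c) ⊓ x' = w := by
  refine le_antisymm ?_ (le_inf le_sup_left hw)
  rintro u ⟨hu1, hu2⟩
  rcases Submodule.mem_sup.mp hu1 with ⟨a, ha, b, hb, rfl⟩
  have hbx : b ∈ x' := by
    have := Submodule.sub_mem x' hu2 (hw ha)
    simpa using this
  have : b ∈ c ⊓ x' := ⟨hb, hbx⟩
  rw [hc] at this
  simp only [Submodule.mem_bot] at this
  subst this
  simpa using ha

theorem stmt11 (q n t r r' s : ℕ)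
    (K : Type*) [Field K] [Fintype K] (hK : Fintype.card K = q)
    (V : Type*) [AddCommGroup V] [Module K V] [FiniteDimensional K V]
    (hn : Module.finrank K V = n)
    (ht : 0 < t) (htr : t ≤ r) (hts : t ≤ s) (hrr' : r < r')
    (hr's : r' + s - t < n)
    (x x' : Submodule K V) (hxx' : x ≤ x')
    (hx : Module.finrank K x = r) (hx' : Module.finrank K x' = r') :
    Nat.card {y : Submodule K V // Module.finrank K y = s ∧
          t ≤ Module.finrank K ↥(y ⊓ x)} + 2
      ≤ Nat.card {y : Submodule K V // Module.finrank K y = s ∧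
          t ≤ Module.finrank K ↥(y ⊓ x')} := by
  have hfinV : Finite V := Module.finite_of_finite K
  -- pick w₀ ≤ x of dimension t - 1
  obtain ⟨w₀, hw₀x, hw₀dim⟩ := aux_exists_le_finrank x (t - 1)
    (by rw [hx]; omega)
  -- pick v₁ ∈ x' \ x
  have hxlt : x < x' := lt_of_le_of_ne hxx' (by
    rintro rfl; rw [hx] at hx'; omega)
  obtain ⟨v₁, hv₁x', hv₁x⟩ := SetLike.exists_of_lt hxlt
  -- pick z ∈ x \ w₀
  have hw₀lt : w₀ < x := lt_of_le_of_ne hw₀x (by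
    rintro rfl; rw [hx] at hw₀dim; omega)
  obtain ⟨z, hzx, hzw₀⟩ := SetLike.exists_of_lt hw₀lt
  set v₂ : V := v₁ + z with hv₂def
  have hv₂x' : v₂ ∈ x' := Submodule.add_mem x' hv₁x' (hxx' hzx)
  have hv₂x : v₂ ∉ x := fun h => hv₁x (by
    have := Submodule.sub_mem x h hzx; simpa [hv₂def] using this)
  -- pick complement piece c of dimension s - t with c ⊓ x' = ⊥
  obtain ⟨u, hu⟩ := Submodule.exists_isCompl x'
  have hudim : Module.finrank K x' + Module.finrank K u = Module.finrank K V :=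
    Submodule.finrank_add_eq_of_isCompl hu
  obtain ⟨c, hcu, hcdim⟩ := aux_exists_le_finrank u (s - t) (by omega)
  have hcx' : c ⊓ x' = ⊥ := by
    rw [← le_bot_iff]
    calc c ⊓ x' ≤ u ⊓ x' := inf_le_inf_right _ hcu
    _ = ⊥ := by rw [inf_comm]; exact hu.inf_eq_bot
  -- the two subspaces w₁, w₂
  have key : ∀ v : V, v ∈ x' → v ∉ x →
      Module.finrank K (w₀ ⊔ span K {v} : Submodule K V) = t := by
    intro v hvx' hvx
    have hv0 : v ≠ 0 := fun h => hvx (h ▸ Submodule.zero_mem x)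
    have hspan : Module.finrank K (span K {v} : Submodule K V) = 1 :=
      finrank_span_singleton hv0
    have hbot : w₀ ⊓ span K {v} = ⊥ := by
      rw [← le_bot_iff]
      rintro u' ⟨hu1, hu2⟩
      rcases Submodule.mem_span_singleton.mp hu2 with ⟨cc, rfl⟩
      rcases eq_or_ne cc 0 with rfl | hcc
      · simp
      · exfalso; apply hvx
        have hcv : cc • v ∈ x := hw₀x hu1
        have : cc⁻¹ • (cc • v) ∈ x := Submodule.smul_mem x _ hcv
        rwa [smul_smul, inv_mul_cancel₀ hcc, one_smul] at this
    have := Submodule.finrank_sup_add_finrank_inf_eq w₀ (span K {v})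
    rw [hbot, finrank_bot, hw₀dim, hspan] at this
    omega
  set w₁ : Submodule K V := w₀ ⊔ span K {v₁} with hw₁def
  set w₂ : Submodule K V := w₀ ⊔ span K {v₂} with hw₂def
  have hw₁x' : w₁ ≤ x' := sup_le (hw₀x.trans hxx') ((span_singleton_le_iff_mem _ _).mpr hv₁x')
  have hw₂x' : w₂ ≤ x' := sup_le (hw₀x.trans hxx') ((span_singleton_le_iff_mem _ _).mpr hv₂x')
  have hw₁dim : Module.finrank K w₁ = t := key v₁ hv₁x' hv₁x
  have hw₂dim : Module.finrank K w₂ = t := key v₂ hv₂x' hv₂x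
  -- the two subspaces y₁, y₂
  set y₁ : Submodule K V := w₁ ⊔ c with hy₁def
  set y₂ : Submodule K V := w₂ ⊔ c with hy₂def
  have hy₁x' : y₁ ⊓ x' = w₁ := aux_sup_inf_eq hw₁x' hcx'
  have hy₂x' : y₂ ⊓ x' = w₂ := aux_sup_inf_eq hw₂x' hcx'
  have hydim : ∀ w : Submodule K V, w ≤ x' → Module.finrank K w = t →
      Module.finrank K (w ⊔ c : Submodule K V) = s := by
    intro w hwx' hwt
    have hbot : w ⊓ c = ⊥ := by
      rw [← le_bot_iff]
      calc w ⊓ c ≤ x' ⊓ c := inf_le_inf_right _ hwx'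
      _ = ⊥ := by rw [inf_comm]; exact hcx'
    have := Submodule.finrank_sup_add_finrank_inf_eq w c
    rw [hbot, finrank_bot, hwt, hcdim] at this
    omega
  have hy₁dim : Module.finrank K y₁ = s := hydim w₁ hw₁x' hw₁dim
  have hy₂dim : Module.finrank K y₂ = s := hydim w₂ hw₂x' hw₂dim
  -- y_i ⊓ x is small
  have hysmall : ∀ (y w : Submodule K V) (v : V), v ∈ x' → v ∉ x →
      w = w₀ ⊔ span K {v} → y ⊓ x' = w → ¬ t ≤ Module.finrank K (y ⊓ x : Submodule K V) := by
    intro y w v hvx' hvx hw hyx' hle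
    have h1 : y ⊓ x ≤ w₀ := by
      calc y ⊓ x ≤ (y ⊓ x') ⊓ x := by
            exact le_inf (inf_le_inf_left _ hxx') inf_le_right
      _ = w ⊓ x := by rw [hyx']
      _ ≤ w₀ := hw ▸ aux_sup_span_inf hw₀x hvx
    have h2 : Module.finrank K (y ⊓ x : Submodule K V) ≤ t - 1 :=
      hw₀dim ▸ Submodule.finrank_mono h1
    omega
  have hy₁small := hysmall y₁ w₁ v₁ hv₁x' hv₁x hw₁def hy₁x'
  have hy₂small := hysmall y₂ w₂ v₂ hv₂x' hv₂x hw₂def hy₂x'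
  -- y₁ ≠ y₂
  have hw₁w₂ : w₁ ≠ w₂ := by
    intro h
    apply hzw₀
    have hv₂w₂ : v₂ ∈ w₂ := (le_sup_right : span K {v₂} ≤ w₂) (Submodule.mem_span_singleton_self v₂)
    have hv₁w₁ : v₁ ∈ w₁ := (le_sup_right : span K {v₁} ≤ w₁) (Submodule.mem_span_singleton_self v₁)
    have hzw₁ : z ∈ w₁ := by
      have : v₂ ∈ w₁ := h ▸ hv₂w₂
      have := Submodule.sub_mem w₁ this hv₁w₁
      simpa [hv₂def] using this
    exact aux_sup_span_inf hw₀x hv₁x ⟨hzw₁, hzx⟩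
  have hy₁y₂ : y₁ ≠ y₂ := fun h => hw₁w₂ (by rw [← hy₁x', ← hy₂x', h])
  -- counting
  set A : Set (Submodule K V) :=
    {y | Module.finrank K y = s ∧ t ≤ Module.finrank K (y ⊓ x : Submodule K V)} with hA
  set B : Set (Submodule K V) :=
    {y | Module.finrank K y = s ∧ t ≤ Module.finrank K (y ⊓ x' : Submodule K V)} with hB
  have hAB : A ⊆ B := by
    rintro y ⟨hy1, hy2⟩
    exact ⟨hy1, le_trans hy2 (Submodule.finrank_mono (inf_le_inf_left _ hxx'))⟩
  have hy₁B : y₁ ∈ B := ⟨hy₁dim, by rw [hy₁x', hw₁dim]⟩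
  have hy₂B : y₂ ∈ B := ⟨hy₂dim, by rw [hy₂x', hw₂dim]⟩
  have hy₁A : y₁ ∉ A := fun h => hy₁small h.2
  have hy₂A : y₂ ∉ A := fun h => hy₂small h.2
  have hdisj : Disjoint A ({y₁, y₂} : Set (Submodule K V)) := by
    rw [Set.disjoint_right]
    rintro a (rfl | rfl) <;> assumption
  have hsub : A ∪ {y₁, y₂} ⊆ B := by
    rintro a (ha | ha)
    · exact hAB ha
    · rcases ha with rfl | ha
      · exact hy₁B
      · rw [Set.mem_singleton_iff] at ha; subst ha; exact hy₂B
  have hcount : A.ncard + 2 ≤ B.ncard := by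
    have := Set.ncard_le_ncard hsub B.toFinite
    rwa [Set.ncard_union_eq hdisj A.toFinite (Set.toFinite _),
      Set.ncard_pair hy₁y₂] at this
  calc Nat.card {y : Submodule K V // Module.finrank K y = s ∧
          t ≤ Module.finrank K ↥(y ⊓ x)} + 2
      = A.ncard + 2 := by rw [← Nat.card_coe_set_eq]; rfl
    _ ≤ B.ncard := hcount
    _ = Nat.card {y : Submodule K V // Module.finrank K y = s ∧
          t ≤ Module.finrank K ↥(y ⊓ x')} := by rw [← Nat.card_coe_set_eq]; rfl
end

section
/- Let n = 2r ≥ 4, s and t positive integers with t ≤ min{r,s}, r + s − t < n, and x an r-subset of [n] with complement x̄. In the bipartite graph on C([n],r) ∪ C([n],s) where an r-set and an s-set are adjacent iff their intersection has size < t, the pair {x, x̄} is contained in a maximum-sized nontrivial independent set (as its trace on the r-sets side) if and only if s = r and t = 1. -/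
open Finset

lemma two_subsets {α : Type*} [DecidableEq α] (w : Finset α) (m : ℕ)
    (h1 : 1 ≤ m) (h2 : m < w.card) :
    ∃ u₁ u₂ : Finset α, u₁ ⊆ w ∧ u₂ ⊆ w ∧ u₁.card = m ∧ u₂.card = m ∧ u₁ ≠ u₂ := by
  obtain ⟨u₁, hu₁w, hu₁⟩ := Finset.exists_subset_card_eq h2.le
  have hne : (w \ u₁).Nonempty := by
    rw [← Finset.card_pos, Finset.card_sdiff_of_subset hu₁w]; omega
  obtain ⟨e, he⟩ := hne
  rw [Finset.mem_sdiff] at he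
  obtain ⟨f, hf⟩ := Finset.card_pos.mp (by omega : 0 < u₁.card)
  refine ⟨u₁, insert e (u₁.erase f), hu₁w, ?_, hu₁, ?_, ?_⟩
  · intro y hy
    rcases Finset.mem_insert.mp hy with h | h
    · exact h ▸ he.1
    · exact hu₁w (Finset.erase_subset _ _ h)
  · rw [Finset.card_insert_of_notMem (fun h => he.2 (Finset.erase_subset _ _ h)),
      Finset.card_erase_of_mem hf]
    omega
  · intro h
    exact he.2 (h ▸ Finset.mem_insert_self e _)

lemma mk_b {n : ℕ} (x u v : Finset (Fin n)) (hu : u ⊆ x) (hv : v ⊆ xᶜ) :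
    (u ∪ v).card = u.card + v.card ∧ x ∩ (u ∪ v) = u ∧ xᶜ ∩ (u ∪ v) = v := by
  have hdx : Disjoint x xᶜ := disjoint_compl_right
  have hduv : Disjoint u v := hdx.mono hu hv
  refine ⟨Finset.card_union_of_disjoint hduv, ?_, ?_⟩
  · rw [Finset.inter_union_distrib_left, Finset.inter_eq_right.mpr hu,
      (Finset.disjoint_iff_inter_eq_empty.mp (hdx.mono_right hv)), Finset.union_empty]
  · rw [Finset.inter_union_distrib_left, Finset.inter_eq_right.mpr hv,
      (Finset.disjoint_iff_inter_eq_empty.mp (hdx.symm.mono_right hu)), Finset.empty_union]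

lemma two_bs {n r s t : ℕ} (hn : n = 2*r) (hn4 : 4 ≤ n) (ht : 0 < t) (htr : t ≤ r)
    (hts : t ≤ s) (hrst : r + s - t < n) (hne : ¬(s = r ∧ t = 1)) (hexc : ¬(s = r ∧ t = r))
    (x : Finset (Fin n)) (hx : x.card = r) (hxc : xᶜ.card = r) :
    ∃ b₁ b₂ : Finset (Fin n), b₁.card = s ∧ b₂.card = s ∧ b₁ ≠ b₂ ∧
      t ≤ (x ∩ b₁).card ∧ (xᶜ ∩ b₁).card < t ∧ t ≤ (x ∩ b₂).card ∧ (xᶜ ∩ b₂).card < t := by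
  have key : ∃ j k, j + k = s ∧ j < t ∧ t ≤ k ∧ k ≤ r ∧ j ≤ r ∧
      ((1 ≤ j ∧ j < r) ∨ (1 ≤ k ∧ k < r)) := by
    rcases Nat.lt_or_ge (s + 1) (2 * t) with hs | hs
    · exact ⟨s - t, t, by omega, by omega, le_refl t, htr, by omega, by omega⟩
    · rcases Nat.eq_or_lt_of_le ht with h1 | h1
      · exact ⟨0, s, by omega, by omega, hts, by omega, by omega, by omega⟩
      · exact ⟨t - 1, s - t + 1, by omega, by omega, by omega, by omega, by omega, by omega⟩
  obtain ⟨j, k, hjk, hjt, htk, hkr, hjr, hvary⟩ := key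
  rcases hvary with ⟨h1, h2⟩ | ⟨h1, h2⟩
  · -- vary v ⊆ xᶜ
    obtain ⟨u, hux, hu⟩ := Finset.exists_subset_card_eq (show k ≤ x.card by omega)
    obtain ⟨v₁, v₂, hv₁c, hv₂c, hv₁, hv₂, hvne⟩ := two_subsets xᶜ j h1 (by omega)
    obtain ⟨hc1, hxb1, hcb1⟩ := mk_b x u v₁ hux hv₁c
    obtain ⟨hc2, hxb2, hcb2⟩ := mk_b x u v₂ hux hv₂c
    refine ⟨u ∪ v₁, u ∪ v₂, by omega, by omega, ?_, by rw [hxb1]; omega, by rw [hcb1]; omega,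
      by rw [hxb2]; omega, by rw [hcb2]; omega⟩
    intro h
    exact hvne (by rw [← hcb1, ← hcb2, h])
  · -- vary u ⊆ x
    obtain ⟨v, hvx, hv⟩ := Finset.exists_subset_card_eq (show j ≤ xᶜ.card by omega)
    obtain ⟨u₁, u₂, hu₁c, hu₂c, hu₁, hu₂, hune⟩ := two_subsets x k h1 (by omega)
    obtain ⟨hc1, hxb1, hcb1⟩ := mk_b x u₁ v hu₁c hvx
    obtain ⟨hc2, hxb2, hcb2⟩ := mk_b x u₂ v hu₂c hvx
    refine ⟨u₁ ∪ v, u₂ ∪ v, by omega, by omega, ?_, by rw [hxb1]; omega, by rw [hcb1]; omega,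
      by rw [hxb2]; omega, by rw [hcb2]; omega⟩
    intro h
    exact hune (by rw [← hxb1, ← hxb2, h])

theorem stmt15 (n r s t : ℕ) (hn : n = 2 * r) (hn4 : 4 ≤ n)
    (ht : 0 < t) (htr : t ≤ r) (hts : t ≤ s) (hrst : r + s - t < n)
    (x : Finset (Fin n)) (hx : x.card = r) (hxc : xᶜ.card = r) :
    FragX (X := {a : Finset (Fin n) // a.card = r})
        (Y := {b : Finset (Fin n) // b.card = s})
        (fun a b => ((a : Finset (Fin n)) ∩ (b : Finset (Fin n))).card < t)
        ({⟨x, hx⟩, ⟨xᶜ, hxc⟩} : Set {a : Finset (Fin n) // a.card = r})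
      ↔ (s = r ∧ t = 1) := by
  have hr2 : 2 ≤ r := by omega
  have hxne : x ≠ xᶜ := by
    intro h
    obtain ⟨e, he⟩ := Finset.card_pos.mp (by omega : 0 < x.card)
    exact (Finset.mem_compl.mp (h ▸ he)) he
  constructor
  · -- hard direction
    rintro ⟨B, ⟨hAne, hBne, hind⟩, hmax⟩
    by_contra hne
    by_cases hexc : s = r ∧ t = r
    · -- degenerate case s = r = t
      obtain ⟨b, hb⟩ := hBne
      have h1 : ¬ ((x ∩ (b : Finset (Fin n))).card < t) :=
        hind ⟨x, hx⟩ (Set.mem_insert _ _) b hb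
      have h2 : ¬ ((xᶜ ∩ (b : Finset (Fin n))).card < t) :=
        hind ⟨xᶜ, hxc⟩ (Set.mem_insert_of_mem _ rfl) b hb
      have hbx : (b : Finset (Fin n)) = x := by
        have : x ∩ (b : Finset (Fin n)) = (b : Finset (Fin n)) := by
          apply Finset.eq_of_subset_of_card_le Finset.inter_subset_right
          have := b.2; omega
        have hsub : (b : Finset (Fin n)) ⊆ x := this ▸ Finset.inter_subset_left
        exact Finset.eq_of_subset_of_card_le hsub (by have := b.2; omega)
      have hbxc : (b : Finset (Fin n)) = xᶜ := by
        have : xᶜ ∩ (b : Finset (Fin n)) = (b : Finset (Fin n)) := by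
          apply Finset.eq_of_subset_of_card_le Finset.inter_subset_right
          have := b.2; omega
        have hsub : (b : Finset (Fin n)) ⊆ xᶜ := this ▸ Finset.inter_subset_left
        exact Finset.eq_of_subset_of_card_le hsub (by have := b.2; omega)
      exact hxne (hbx ▸ hbxc)
    · -- main case: build a strictly larger independent set
      obtain ⟨b₁, b₂, hb₁c, hb₂c, hbne, hx1, hc1, hx2, hc2⟩ :=
        two_bs hn hn4 ht htr hts hrst hne hexc x hx hxc
      set B₀ : Set {b : Finset (Fin n) // b.card = s} := {b | t ≤ (x ∩ (b : Finset (Fin n))).card ∧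
        t ≤ (xᶜ ∩ (b : Finset (Fin n))).card} with hB₀
      have hBsub : B ⊆ B₀ := by
        intro b hb
        exact ⟨not_lt.mp (hind ⟨x, hx⟩ (Set.mem_insert _ _) b hb),
          not_lt.mp (hind ⟨xᶜ, hxc⟩ (Set.mem_insert_of_mem _ rfl) b hb)⟩
      set p₁ : {b : Finset (Fin n) // b.card = s} := ⟨b₁, hb₁c⟩
      set p₂ : {b : Finset (Fin n) // b.card = s} := ⟨b₂, hb₂c⟩
      have hp₁ : p₁ ∉ B₀ := fun h => by have := h.2; simp only [p₁] at this; omega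
      have hp₂ : p₂ ∉ B₀ := fun h => by have := h.2; simp only [p₂] at this; omega
      have hpne : p₁ ≠ p₂ := fun h => hbne (Subtype.mk_eq_mk.mp h)
      have hdisj : Disjoint B₀ ({p₁, p₂} : Set {b : Finset (Fin n) // b.card = s}) := by
        rw [Set.disjoint_right]
        rintro b (rfl | rfl) <;> assumption
      have hcard : (B₀ ∪ {p₁, p₂}).ncard = B₀.ncard + 2 := by
        rw [Set.ncard_union_eq hdisj (Set.toFinite _) (Set.toFinite _), Set.ncard_pair hpne]
      have hindep : NontrivIndep
          (fun (a : {a : Finset (Fin n) // a.card = r}) (b : {b : Finset (Fin n) // b.card = s}) =>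
            ((a : Finset (Fin n)) ∩ (b : Finset (Fin n))).card < t)
          {⟨x, hx⟩} (B₀ ∪ {p₁, p₂}) := by
        refine ⟨⟨⟨x, hx⟩, rfl⟩, ⟨p₁, Or.inr (Set.mem_insert _ _)⟩, ?_⟩
        rintro a rfl b hb
        rcases hb with hb | hb
        · have := hb.1; simp only [not_lt]; exact this
        · rcases hb with rfl | rfl
          · simp only [not_lt]; exact hx1
          · simp only [not_lt]; exact hx2
      have hle := hmax {⟨x, hx⟩} (B₀ ∪ {p₁, p₂}) hindep
      rw [Set.ncard_singleton, hcard] at hle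
      have hA2 : ({⟨x, hx⟩, ⟨xᶜ, hxc⟩} : Set {a : Finset (Fin n) // a.card = r}).ncard ≤ 2 :=
        le_trans (Set.ncard_insert_le _ _) (by rw [Set.ncard_singleton])
      have hB0 : B.ncard ≤ B₀.ncard := Set.ncard_le_ncard hBsub (Set.toFinite _)
      omega
  · -- easy direction
    rintro ⟨hsr, rfl⟩
    subst hsr
    -- helper: an r-set disjoint from x is xᶜ, and one disjoint from xᶜ is x
    have key1 : ∀ b : Finset (Fin n), b.card = s → (x ∩ b).card < 1 → b = xᶜ := by
      intro b hb h
      have hdisj : Disjoint x b := by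
        rw [Finset.disjoint_iff_inter_eq_empty, ← Finset.card_eq_zero]; omega
      have hsub : b ⊆ xᶜ := fun a ha => Finset.mem_compl.mpr (Finset.disjoint_right.mp hdisj ha)
      exact Finset.eq_of_subset_of_card_le hsub (by omega)
    have key2 : ∀ b : Finset (Fin n), b.card = s → (xᶜ ∩ b).card < 1 → b = x := by
      intro b hb h
      have hdisj : Disjoint xᶜ b := by
        rw [Finset.disjoint_iff_inter_eq_empty, ← Finset.card_eq_zero]; omega
      have hsub : b ⊆ x := fun a ha => by
        by_contra hax
        exact Finset.disjoint_right.mp hdisj ha (Finset.mem_compl.mpr hax)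
      exact Finset.eq_of_subset_of_card_le hsub (by omega)
    refine ⟨({⟨x, hx⟩, ⟨xᶜ, hxc⟩} : Set {a : Finset (Fin n) // a.card = s})ᶜ,
      ⟨⟨⟨x, hx⟩, Set.mem_insert _ _⟩, ?_, ?_⟩, ?_⟩
    · -- complement nonempty
      obtain ⟨u, hux, hu⟩ := Finset.exists_subset_card_eq (show s - 1 ≤ x.card by omega)
      obtain ⟨v, hvx, hv⟩ := Finset.exists_subset_card_eq (show 1 ≤ xᶜ.card by omega)
      obtain ⟨hc, hxb, hcb⟩ := mk_b x u v hux hvx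
      refine ⟨⟨u ∪ v, by omega⟩, ?_⟩
      intro hmem
      simp only [Set.mem_insert_iff, Set.mem_singleton_iff, Subtype.mk_eq_mk] at hmem
      rcases hmem with hmem | hmem
      · have : x ∩ (u ∪ v) = x := by rw [hmem, Finset.inter_self]
        rw [hxb] at this
        have := congrArg Finset.card this; omega
      · have : xᶜ ∩ (u ∪ v) = xᶜ := by rw [hmem, Finset.inter_self]
        rw [hcb] at this
        have := congrArg Finset.card this; omega
    · -- independence
      rintro a ha b hb
      simp only [Set.mem_compl_iff, Set.mem_insert_iff, Set.mem_singleton_iff, not_or] at hb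
      rcases ha with rfl | ha
      · intro hlt
        exact hb.2 (Subtype.ext (key1 b.1 b.2 hlt))
      · rw [Set.mem_singleton_iff] at ha
        subst ha
        intro hlt
        exact hb.1 (Subtype.ext (key2 b.1 b.2 hlt))
    · -- maximality
      intro A' B' ⟨hA'ne, hB'ne, hind'⟩
      have hrhs : ({⟨x, hx⟩, ⟨xᶜ, hxc⟩} : Set {a : Finset (Fin n) // a.card = s}).ncard +
          (({⟨x, hx⟩, ⟨xᶜ, hxc⟩} : Set {a : Finset (Fin n) // a.card = s})ᶜ).ncard =
          Nat.card {a : Finset (Fin n) // a.card = s} :=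
        Set.ncard_add_ncard_compl _
      set c : {a : Finset (Fin n) // a.card = s} → {a : Finset (Fin n) // a.card = s} :=
        fun a => ⟨(a : Finset (Fin n))ᶜ, by
          rw [Finset.card_compl, a.2, Fintype.card_fin]; omega⟩ with hc
      have hcinj : Function.Injective c := by
        intro a b hab
        rw [Subtype.mk_eq_mk] at hab
        exact Subtype.ext (compl_injective hab)
      have hdisj : Disjoint A' (c '' B') := by
        rw [Set.disjoint_right]
        rintro a ⟨b, hb, rfl⟩ ha
        have := hind' _ ha b hb
        apply this
        have : ((c b : Finset (Fin n))) ∩ (b : Finset (Fin n)) = ∅ := by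
          show (b : Finset (Fin n))ᶜ ∩ (b : Finset (Fin n)) = ∅
          rw [Finset.inter_comm, ← Finset.disjoint_iff_inter_eq_empty]
          exact disjoint_compl_right
        rw [this]
        simp
      calc A'.ncard + B'.ncard = A'.ncard + (c '' B').ncard := by
            rw [Set.ncard_image_of_injective _ hcinj]
        _ = (A' ∪ c '' B').ncard :=
            (Set.ncard_union_eq hdisj (Set.toFinite _) (Set.toFinite _)).symm
        _ ≤ (Set.univ : Set {a : Finset (Fin n) // a.card = s}).ncard :=
            Set.ncard_le_ncard (Set.subset_univ _) (Set.toFinite _)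
        _ = Nat.card {a : Finset (Fin n) // a.card = s} := Set.ncard_univ _
        _ = _ := hrhs.symm
end

section
/- Let n, r, s, t be positive integers with n ≥ max{2^(s+1)(s−t), s² } + 2r + 1, t ≤ r < s (so in particular s > t). Then C(r,t)·C(n−r, s−t) > Σ_{j=t}^{r} C(s,j)·C(n−s, r−j) (in fact this inequality holds whenever n ≥ 2^(s+1)(s−t) + 2r + 1 and s > r ≥ t). -/
lemma choose_mono_half {N k m : ℕ} (hk : k ≤ m) (hm : 2 * m ≤ N) :
    N.choose k ≤ N.choose m := by
  obtain ⟨d, rfl⟩ := Nat.exists_eq_add_of_le hk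
  clear hk
  induction d with
  | zero => simp
  | succ d ih =>
    have h1 : 2 * (k + d) ≤ N := by omega
    refine (ih h1).trans ?_
    have h2 : k + d < N / 2 := by omega
    exact Nat.choose_le_succ_of_lt_half_left h2

theorem stmt17 (n r s t : ℕ) (ht : 0 < t) (htr : t ≤ r) (hrs : r < s)
    (hn : max (2 ^ (s + 1) * (s - t)) (s ^ 2) + 2 * r + 1 ≤ n) :
    ∑ j ∈ Finset.Icc t r, s.choose j * (n - s).choose (r - j)
      < r.choose t * (n - r).choose (s - t) := by
  have hn1 : 2 ^ (s + 1) * (s - t) + 2 * r + 1 ≤ n := by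
    have := le_max_left (2 ^ (s + 1) * (s - t)) (s ^ 2); omega
  have hn2 : s ^ 2 + 2 * r + 1 ≤ n := by
    have := le_max_right (2 ^ (s + 1) * (s - t)) (s ^ 2); omega
  have hs2 : 2 ≤ s := by omega
  -- n - s ≥ 2*(s-t)
  have hsq : 3 * s ≤ s ^ 2 + 3 := by
    rcases Nat.lt_or_ge s 3 with h | h
    · (interval_cases s; omega)
    · nlinarith
  have hNbig : s + 2 * (s - t) ≤ n := by omega
  have hhalf : 2 * (s - t) ≤ n - s := by omega
  have hhalf' : 2 * (r - t) ≤ n - s := by omega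
  -- pow facts
  have hps : s < 2 ^ s := Nat.lt_two_pow_self
  have hM : 2 ^ s ≤ 2 ^ s * (s - t) := Nat.le_mul_of_pos_right _ (by omega)
  have hpow : 2 ^ (s + 1) * (s - t) = 2 * (2 ^ s * (s - t)) := by ring
  -- key numeric inequality
  have hkey : 2 ^ s * (r - t + 1) < (n - s) - (r - t) := by
    have hQ : 2 ^ s * (r - t + 1) ≤ 2 ^ s * (s - t) :=
      Nat.mul_le_mul_left _ (by omega)
    omega
  -- bound the sum
  have hsum : ∑ j ∈ Finset.Icc t r, s.choose j * (n - s).choose (r - j)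
      ≤ 2 ^ s * (n - s).choose (r - t) := by
    calc ∑ j ∈ Finset.Icc t r, s.choose j * (n - s).choose (r - j)
        ≤ ∑ j ∈ Finset.Icc t r, s.choose j * (n - s).choose (r - t) := by
          refine Finset.sum_le_sum fun j hj => ?_
          have hj' := Finset.mem_Icc.mp hj
          exact Nat.mul_le_mul_left _ (choose_mono_half (by omega) (by omega))
      _ = (∑ j ∈ Finset.Icc t r, s.choose j) * (n - s).choose (r - t) := by
          rw [Finset.sum_mul]
      _ ≤ 2 ^ s * (n - s).choose (r - t) := by
          refine Nat.mul_le_mul_right _ ?_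
          calc ∑ j ∈ Finset.Icc t r, s.choose j
              ≤ ∑ j ∈ Finset.range (s + 1), s.choose j := by
                refine Finset.sum_le_sum_of_subset ?_
                intro j hj
                have := Finset.mem_Icc.mp hj
                exact Finset.mem_range.mpr (by omega)
            _ = 2 ^ s := Nat.sum_range_choose s
  -- strict step
  have hstrict : 2 ^ s * (n - s).choose (r - t) < (n - s).choose (r - t + 1) := by
    have hpos : 0 < (n - s).choose (r - t) := Nat.choose_pos (by omega)
    have heq : (n - s).choose (r - t + 1) * (r - t + 1)
        = (n - s).choose (r - t) * ((n - s) - (r - t)) :=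
      Nat.choose_succ_right_eq _ _
    have h2 : 2 ^ s * (n - s).choose (r - t) * (r - t + 1)
        < (n - s).choose (r - t + 1) * (r - t + 1) := by
      rw [heq]
      calc 2 ^ s * (n - s).choose (r - t) * (r - t + 1)
          = (n - s).choose (r - t) * (2 ^ s * (r - t + 1)) := by ring
        _ < (n - s).choose (r - t) * ((n - s) - (r - t)) :=
            Nat.mul_lt_mul_of_le_of_lt (le_refl _) hkey hpos
    exact Nat.lt_of_mul_lt_mul_right h2
  have hmono : (n - s).choose (r - t + 1) ≤ (n - s).choose (s - t) :=
    choose_mono_half (by omega) hhalf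
  have hup : (n - s).choose (s - t) ≤ (n - r).choose (s - t) :=
    Nat.choose_le_choose _ (by omega)
  have hfin : (n - r).choose (s - t) ≤ r.choose t * (n - r).choose (s - t) :=
    Nat.le_mul_of_pos_left _ (Nat.choose_pos htr)
  omega
end

section
/- Let q ≥ 2 be a prime power and n, r, s, t positive integers with t ≤ r < s and s² + r² + sr ≤ n. Then q^((r−t)(s−t)) · [r choose t]_q · [n−r choose s−t]_q > Σ_{j=t}^{r} q^((s−j)(r−j)) · [s choose j]_q · [n−s choose r−j]_q. -/
lemma gaussBinom_lower (q : ℕ) (hq : 1 ≤ q) :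
    ∀ m k, k ≤ m → q ^ (k * (m - k)) ≤ gaussBinom q m k := by
  intro m
  induction m with
  | zero =>
    intro k hk
    interval_cases k
    simp [gaussBinom]
  | succ m ih =>
    intro k hk
    match k with
    | 0 => simp [gaussBinom]
    | k + 1 =>
      show _ ≤ gaussBinom q m k + q ^ (k + 1) * gaussBinom q m (k + 1)
      rcases Nat.lt_or_ge k m with h | h
      · have h1 := ih (k + 1) h
        have he : m + 1 - (k + 1) = (m - (k + 1)) + 1 := by omega
        rw [he]
        calc q ^ ((k+1) * (m - (k+1) + 1)) = q ^ (k+1) * q ^ ((k+1) * (m - (k+1))) := by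
              rw [← pow_add]; ring_nf
          _ ≤ q ^ (k+1) * gaussBinom q m (k+1) := Nat.mul_le_mul_left _ h1
          _ ≤ _ := Nat.le_add_left _ _
      · have hk' : k = m := by omega
        subst hk'
        have h1 := ih k le_rfl
        simp only [Nat.sub_self, Nat.mul_zero, pow_zero] at h1 ⊢
        omega

lemma gaussBinom_prod (q : ℕ) (hq : 1 ≤ q) :
    ∀ m k, gaussBinom q m k * ∏ i ∈ Finset.range k, (q ^ (i + 1) - 1)
      = ∏ i ∈ Finset.range k, (q ^ (m - i) - 1) := by
  intro m
  induction m with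
  | zero =>
    intro k
    match k with
    | 0 => simp [gaussBinom]
    | k + 1 =>
      rw [show gaussBinom q 0 (k + 1) = 0 from rfl, Nat.zero_mul,
        Finset.prod_range_succ' (fun i => q ^ (0 - i) - 1)]
      simp
  | succ m ih =>
    intro k
    match k with
    | 0 => simp [gaussBinom]
    | k + 1 =>
      show (gaussBinom q m k + q ^ (k + 1) * gaussBinom q m (k + 1)) * _ = _
      rw [Finset.prod_range_succ' (fun i => q ^ (m + 1 - i) - 1)]
      simp only [Nat.succ_sub_succ, Nat.sub_zero]
      rw [Nat.add_mul, Nat.mul_assoc (q ^ (k + 1)), ih (k + 1),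
        Finset.prod_range_succ, Finset.prod_range_succ, ← Nat.mul_assoc, ih k]
      rcases Nat.lt_or_ge m k with h | h
      · have hz : ∏ i ∈ Finset.range k, (q ^ (m - i) - 1) = 0 := by
          apply Finset.prod_eq_zero (Finset.mem_range.mpr h)
          simp [Nat.sub_eq_zero_of_le (le_of_lt h)]
        rw [hz]
        ring
      · have hmul : q ^ (k + 1) * q ^ (m - k) = q ^ (m + 1) := by
          rw [← pow_add]; congr 1; omega
        have h1 : 1 ≤ q ^ (k + 1) := Nat.one_le_pow _ _ hq
        have h2 : 1 ≤ q ^ (m - k) := Nat.one_le_pow _ _ hq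
        rw [mul_left_comm, ← Nat.mul_add]
        congr 1
        have h3 : q ^ (k + 1) ≤ q ^ (m + 1) := Nat.pow_le_pow_right hq (by omega)
        rw [Nat.mul_sub, Nat.mul_one, hmul]
        omega

lemma gaussBinom_upper (q : ℕ) (hq : 2 ≤ q) (m k : ℕ) (hk : k ≤ m) :
    gaussBinom q m k ≤ q ^ (k * (m - k) + k) := by
  have hq1 : 1 ≤ q := by omega
  have hfac : ∀ i : ℕ, q ^ i ≤ q ^ (i + 1) - 1 := by
    intro i
    have h1 : q ^ (i + 1) = q ^ i * q := pow_succ q i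
    have h2 : 1 ≤ q ^ i := Nat.one_le_pow _ _ hq1
    have h3 : q ^ i * 2 ≤ q ^ (i + 1) := by
      rw [h1]; exact Nat.mul_le_mul_left _ hq
    omega
  have hD : q ^ (∑ i ∈ Finset.range k, i) ≤ ∏ i ∈ Finset.range k, (q ^ (i + 1) - 1) := by
    rw [← Finset.prod_pow_eq_pow_sum]
    exact Finset.prod_le_prod (fun i _ => Nat.zero_le _) (fun i _ => hfac i)
  have hN : ∏ i ∈ Finset.range k, (q ^ (m - i) - 1) ≤ q ^ (∑ i ∈ Finset.range k, (m - i)) := by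
    rw [← Finset.prod_pow_eq_pow_sum]
    exact Finset.prod_le_prod (fun i _ => Nat.zero_le _) (fun i _ => Nat.sub_le _ _)
  have hexp : ∑ i ∈ Finset.range k, (m - i) = (k * (m - k) + k) + ∑ i ∈ Finset.range k, i := by
    have h1 : (∑ i ∈ Finset.range k, (m - i)) + (∑ i ∈ Finset.range k, i) = k * m := by
      rw [← Finset.sum_add_distrib]
      rw [Finset.sum_congr rfl (fun i hi => by
        have := Finset.mem_range.mp hi; omega : ∀ i ∈ Finset.range k, m - i + i = m)]
      simp [Finset.sum_const, Nat.mul_comm]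
    have h2 : (∑ i ∈ Finset.range k, i) * 2 = k * (k - 1) := Finset.sum_range_id_mul_two k
    have h3 : k * (m - k) = k * m - k * k := Nat.mul_sub k m k
    have h4 : k * k ≤ k * m := Nat.mul_le_mul_left k hk
    have h5 : k * (k - 1) = k * k - k := by rw [Nat.mul_sub, Nat.mul_one]
    have h6 : k ≤ k * k := by
      rcases Nat.eq_zero_or_pos k with h | h
      · simp [h]
      · exact Nat.le_mul_of_pos_left k h
    have key : ∀ A B C D S1 S2 : ℕ, S1 + S2 = A → S2 * 2 = D → C = A - B → B ≤ A →
        D = B - k → k ≤ B → S1 = C + k + S2 := by intros; omega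
    exact key (k * m) (k * k) (k * (m - k)) (k * (k - 1)) _ _ h1 h2 h3 h4 h5 h6
  have hmain : gaussBinom q m k * q ^ (∑ i ∈ Finset.range k, i)
      ≤ q ^ (k * (m - k) + k) * q ^ (∑ i ∈ Finset.range k, i) := by
    calc gaussBinom q m k * q ^ (∑ i ∈ Finset.range k, i)
        ≤ gaussBinom q m k * ∏ i ∈ Finset.range k, (q ^ (i + 1) - 1) :=
          Nat.mul_le_mul_left _ hD
      _ = ∏ i ∈ Finset.range k, (q ^ (m - i) - 1) := gaussBinom_prod q hq1 m k
      _ ≤ q ^ (∑ i ∈ Finset.range k, (m - i)) := hN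
      _ = q ^ (k * (m - k) + k) * q ^ (∑ i ∈ Finset.range k, i) := by
          rw [← pow_add, hexp]
  exact Nat.le_of_mul_le_mul_right hmain (pow_pos (by omega) _)

lemma expkey (n r s t j : ℕ) (ht : 1 ≤ t) (htj : t ≤ j) (hjr : j ≤ r) (hrs : r < s)
    (hn : s ^ 2 + r ^ 2 + s * r ≤ n) :
    (s - j) * (r - j) + (j * (s - j) + j) + ((r - j) * (n - s - (r - j)) + (r - j)) + (r + 1)
      ≤ (r - t) * (s - t) + t * (r - t) + (s - t) * (n - r - (s - t)) := by
  have h1 : j ≤ s := by omega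
  have h2 : t ≤ s := by omega
  have htr : t ≤ r := le_trans htj hjr
  have hsr : s + r ≤ n := by nlinarith
  have h3 : r - j ≤ n - s := by omega
  have h4 : s - t ≤ n - r := by omega
  have h5 : s ≤ n := by omega
  have h6 : r ≤ n := by omega
  have hrs' : r ≤ s := le_of_lt hrs
  zify [htj, hjr, h1, h2, h3, h4, h5, h6, htr, hrs'] at hn ⊢
  have hd : (0:ℤ) ≤ (n:ℤ) - r - s := by omega
  have hco : (1:ℤ) ≤ (s:ℤ) - r + j - t := by omega
  have ht' : (1:ℤ) ≤ t := by omega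
  have htj' : (t:ℤ) ≤ j := by omega
  have hjr' : (j:ℤ) ≤ r := by omega
  have hr1 : (1:ℤ) ≤ r := by omega
  have hs2 : (2:ℤ) ≤ s := by omega
  have hrs2 : (r:ℤ) + 1 ≤ s := by omega
  nlinarith [mul_le_mul_of_nonneg_left hco hd,
    mul_le_mul htj' htj' (by positivity) (show (0:ℤ) ≤ j by positivity),
    mul_le_mul_of_nonneg_left hs2 (show (0:ℤ) ≤ s by positivity),
    mul_le_mul_of_nonneg_left hr1 (show (0:ℤ) ≤ r by positivity),
    mul_le_mul_of_nonneg_left (show (2:ℤ) ≤ s by omega) (show (0:ℤ) ≤ r by positivity)]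

theorem stmt18 (q n r s t : ℕ) (hq : IsPrimePow q) (hq2 : 2 ≤ q)
    (ht : 0 < t) (htr : t ≤ r) (hrs : r < s)
    (hn : s ^ 2 + r ^ 2 + s * r ≤ n) :
    ∑ j ∈ Finset.Icc t r,
        q ^ ((s - j) * (r - j)) * gaussBinom q s j * gaussBinom q (n - s) (r - j)
      < q ^ ((r - t) * (s - t)) * gaussBinom q r t * gaussBinom q (n - r) (s - t) := by
  have hq1 : 1 ≤ q := by omega
  have hsr : s + r ≤ n := by nlinarith
  have hst : s - t ≤ n - r := by omega
  set F := (r - t) * (s - t) + t * (r - t) + (s - t) * (n - r - (s - t)) with hFdef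
  have hRHS : q ^ F ≤ q ^ ((r - t) * (s - t)) * gaussBinom q r t * gaussBinom q (n - r) (s - t) := by
    have h1 := gaussBinom_lower q hq1 r t htr
    have h2 := gaussBinom_lower q hq1 (n - r) (s - t) hst
    calc q ^ F = q ^ ((r - t) * (s - t)) * q ^ (t * (r - t)) * q ^ ((s - t) * (n - r - (s - t))) := by
          rw [hFdef, pow_add, pow_add]
      _ ≤ _ := Nat.mul_le_mul (Nat.mul_le_mul_left _ h1) h2
  have hterm : ∀ j ∈ Finset.Icc t r,
      (q ^ ((s - j) * (r - j)) * gaussBinom q s j * gaussBinom q (n - s) (r - j)) * q ^ (r + 1)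
        ≤ q ^ F := by
    intro j hj
    obtain ⟨htj, hjr⟩ := Finset.mem_Icc.mp hj
    have hus : gaussBinom q s j ≤ q ^ (j * (s - j) + j) :=
      gaussBinom_upper q hq2 s j (by omega)
    have hun : gaussBinom q (n - s) (r - j) ≤ q ^ ((r - j) * (n - s - (r - j)) + (r - j)) :=
      gaussBinom_upper q hq2 (n - s) (r - j) (by omega)
    calc (q ^ ((s - j) * (r - j)) * gaussBinom q s j * gaussBinom q (n - s) (r - j)) * q ^ (r + 1)
        ≤ (q ^ ((s - j) * (r - j)) * q ^ (j * (s - j) + j)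
            * q ^ ((r - j) * (n - s - (r - j)) + (r - j))) * q ^ (r + 1) :=
          Nat.mul_le_mul_right _ (Nat.mul_le_mul (Nat.mul_le_mul_left _ hus) hun)
      _ = q ^ ((s - j) * (r - j) + (j * (s - j) + j)
            + ((r - j) * (n - s - (r - j)) + (r - j)) + (r + 1)) := by
          simp only [pow_add]
      _ ≤ q ^ F := Nat.pow_le_pow_right hq1 (expkey n r s t j ht htj hjr hrs hn)
  have hsum : (∑ j ∈ Finset.Icc t r,
      q ^ ((s - j) * (r - j)) * gaussBinom q s j * gaussBinom q (n - s) (r - j)) * q ^ (r + 1)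
        ≤ (r + 1 - t) * q ^ F := by
    rw [Finset.sum_mul]
    calc _ ≤ ∑ _j ∈ Finset.Icc t r, q ^ F := Finset.sum_le_sum hterm
      _ = (Finset.Icc t r).card * q ^ F := by rw [Finset.sum_const, smul_eq_mul]
      _ = (r + 1 - t) * q ^ F := by rw [Nat.card_Icc]
  have hcard : r + 1 - t ≤ q ^ r := by
    have h1 : r + 1 - t ≤ r := by omega
    have h2 : r < 2 ^ r := Nat.lt_two_pow_self (n := r)
    have h3 : 2 ^ r ≤ q ^ r := Nat.pow_le_pow_left hq2 r
    omega
  have hlt : (∑ j ∈ Finset.Icc t r,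
      q ^ ((s - j) * (r - j)) * gaussBinom q s j * gaussBinom q (n - s) (r - j)) * q ^ (r + 1)
        < q ^ F * q ^ (r + 1) := by
    calc _ ≤ (r + 1 - t) * q ^ F := hsum
      _ ≤ q ^ r * q ^ F := Nat.mul_le_mul_right _ hcard
      _ < q ^ (r + 1) * q ^ F := by
          exact (Nat.mul_lt_mul_right (pow_pos (by omega) _)).mpr
            (Nat.pow_lt_pow_right (by omega) (by omega))
      _ = q ^ F * q ^ (r + 1) := Nat.mul_comm _ _
  exact lt_of_lt_of_le (Nat.lt_of_mul_lt_mul_right hlt) hRHS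
end
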